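/- arXiv:1909.06475 — 10 statements merged into one kernel-verified Lean document; each statement's English description precedes it below -/
import Mathlib

section
/- There is no Mendelsohn triple system of order 6. -/
/-- The underlying 3-element block of a cyclic triple. -/
def mtsBlock {v : ℕ} (t : Fin v × Fin v × Fin v) : Finset (Fin v) :=
  {t.1, t.2.1, t.2.2}

/-- The multiset of ordered pairs contained in the cyclic triple `(x,y,z)`,
namely `(x,y)`, `(y,z)`, `(z,x)`. -/
def mtsPairs {v : ℕ} (t : Fin v × Fin v × Fin v) : Multiset (Fin v × Fin v) :=
  {(t.1, t.2.1), (t.2.1, t.2.2), (t.2.2, t.1)}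

/-- `T` is a Mendelsohn triple system of order `v`: a collection of cyclic
triples of distinct points such that every ordered pair of distinct points
occurs in exactly one triple. -/
def IsMTS {v : ℕ} (T : Multiset (Fin v × Fin v × Fin v)) : Prop :=
  (∀ t ∈ T, t.1 ≠ t.2.1 ∧ t.2.1 ≠ t.2.2 ∧ t.2.2 ≠ t.1) ∧
  ∀ x y : Fin v, x ≠ y → Multiset.count (x, y) (T.bind mtsPairs) = 1

/-- `xs` is an `ℓ`-good sequencing of the collection `T` of cyclic triples:
`xs` is a permutation of the point set, and for every triple `(x,y,z)` of `T`
(with positions `i`, `j`, `k` in `xs`) it is not the case that `i < j < k` with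
`k - i + 1 ≤ ℓ`, nor `j < k < i` with `i - j + 1 ≤ ℓ`, nor `k < i < j` with
`j - k + 1 ≤ ℓ`. -/
def IsGoodSeq {v : ℕ} (ℓ : ℕ) (T : Multiset (Fin v × Fin v × Fin v))
    (xs : List (Fin v)) : Prop :=
  xs.Perm (List.finRange v) ∧
  ∀ t ∈ T,
    ¬(xs.idxOf t.1 < xs.idxOf t.2.1 ∧ xs.idxOf t.2.1 < xs.idxOf t.2.2 ∧
        xs.idxOf t.2.2 - xs.idxOf t.1 + 1 ≤ ℓ) ∧
    ¬(xs.idxOf t.2.1 < xs.idxOf t.2.2 ∧ xs.idxOf t.2.2 < xs.idxOf t.1 ∧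
        xs.idxOf t.1 - xs.idxOf t.2.1 + 1 ≤ ℓ) ∧
    ¬(xs.idxOf t.2.2 < xs.idxOf t.1 ∧ xs.idxOf t.1 < xs.idxOf t.2.1 ∧
        xs.idxOf t.2.1 - xs.idxOf t.2.2 + 1 ≤ ℓ)

/-- `B` is a twofold triple system of order `v`: a multiset of 3-element
blocks such that every 2-element subset of points lies in exactly two blocks,
counted with multiplicity. -/
def IsTTS {v : ℕ} (B : Multiset (Finset (Fin v))) : Prop :=
  (∀ b ∈ B, b.card = 3) ∧
  ∀ x y : Fin v, x ≠ y → B.countP (fun b => x ∈ b ∧ y ∈ b) = 2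


namespace NoMTS6

def coverL (t : ℕ × ℕ × ℕ) : List ℕ :=
  [t.1 * 6 + t.2.1, t.2.1 * 6 + t.2.2, t.2.2 * 6 + t.1]

lemma coverL_eq (t : ℕ × ℕ × ℕ) :
    coverL t = [t.1 * 6 + t.2.1, t.2.1 * 6 + t.2.2, t.2.2 * 6 + t.1] := rfl

def cands (p : ℕ) : List (ℕ × ℕ × ℕ) :=
  (List.range 6).filterMap fun c =>
    if c = p / 6 ∨ c = p % 6 then none else some (p / 6, p % 6, c)

def search : ℕ → List ℕ → Bool
  | 0, rem => rem.isEmpty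
  | n+1, rem =>
    match rem with
    | [] => true
    | p :: _ =>
      (cands p).any fun t =>
        (coverL t).all (fun q => rem.contains q) &&
          search n (rem.filter fun q => !(coverL t).contains q)

def allPairs : List ℕ :=
  (List.range 6).flatMap fun a =>
    (List.range 6).filterMap fun b => if a = b then none else some (a * 6 + b)

def Valid (t : ℕ × ℕ × ℕ) : Prop :=
  t.1 < 6 ∧ t.2.1 < 6 ∧ t.2.2 < 6 ∧ t.1 ≠ t.2.1 ∧ t.2.1 ≠ t.2.2 ∧ t.2.2 ≠ t.1

lemma swap3 (x y z : ℕ) : (↑[y, z, x] : Multiset ℕ) = ↑[x, y, z] := by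
  show (y ::ₘ z ::ₘ x ::ₘ 0 : Multiset ℕ) = x ::ₘ y ::ₘ z ::ₘ 0
  rw [Multiset.cons_swap z x, Multiset.cons_swap y x]

lemma rot {t : ℕ × ℕ × ℕ} {p : ℕ} (ht : Valid t) (hp : p ∈ coverL t) :
    ∃ t', Valid t' ∧ p = t'.1 * 6 + t'.2.1 ∧
      (↑(coverL t') : Multiset ℕ) = ↑(coverL t) := by
  obtain ⟨a, b, c⟩ := t
  obtain ⟨h1, h2, h3, h4, h5, h6⟩ := ht
  simp only [coverL, List.mem_cons, List.not_mem_nil, or_false] at hp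
  rcases hp with h | h | h
  · exact ⟨(a, b, c), ⟨h1, h2, h3, h4, h5, h6⟩, h, rfl⟩
  · exact ⟨(b, c, a), ⟨h2, h3, h1, h5, h6, h4⟩, h, swap3 _ _ _⟩
  · refine ⟨(c, a, b), ⟨h3, h1, h2, h6, h4, h5⟩, h, ?_⟩
    show (↑[c*6+a, a*6+b, b*6+c] : Multiset ℕ) = ↑[a*6+b, b*6+c, c*6+a]
    rw [← swap3 (c*6+a) (a*6+b) (b*6+c)]

lemma mem_cands {a b c : ℕ} (ha : a < 6) (hb : b < 6) (hc : c < 6)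
    (hca : c ≠ a) (hcb : c ≠ b) : (a, b, c) ∈ cands (a * 6 + b) := by
  have hd : (a * 6 + b) / 6 = a := by omega
  have hm : (a * 6 + b) % 6 = b := by omega
  refine List.mem_filterMap.mpr ⟨c, List.mem_range.mpr hc, ?_⟩
  rw [hd, hm, if_neg (by tauto)]

lemma search_complete : ∀ n (S : Multiset (ℕ × ℕ × ℕ)) (rem : List ℕ),
    Multiset.card S ≤ n → (∀ t ∈ S, Valid t) →
    (↑rem : Multiset ℕ) = S.bind (fun t => ↑(coverL t)) → rem.Nodup →
    search n rem = true := by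
  intro n
  induction n with
  | zero =>
    intro S rem hcard hval heq hnd
    have hS : S = 0 := Multiset.card_eq_zero.mp (Nat.le_zero.mp hcard)
    subst hS
    simp only [Multiset.zero_bind, Multiset.coe_eq_zero] at heq
    subst heq; rfl
  | succ n ih =>
    intro S rem hcard hval heq hnd
    match rem with
    | [] => rfl
    | p :: rest =>
      have hpmem : p ∈ S.bind (fun t => (↑(coverL t) : Multiset ℕ)) := by
        rw [← heq]; exact List.mem_cons_self
      obtain ⟨t, htS, hpt⟩ := Multiset.mem_bind.mp hpmem
      have hptl : p ∈ coverL t := by exact_mod_cast hpt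
      obtain ⟨t', hval', hp', hcov⟩ := rot (hval t htS) hptl
      obtain ⟨a, b, c⟩ := t'
      obtain ⟨ha, hb, hc, hab, hbc, hca⟩ := hval'
      have hcmem : (a, b, c) ∈ cands p := by
        rw [hp']; exact mem_cands ha hb hc hca (Ne.symm hbc)
      have hSdec : S = t ::ₘ S.erase t := (Multiset.cons_erase htS).symm
      have hremdec : (↑(p :: rest) : Multiset ℕ) =
          (↑(coverL (a, b, c)) : Multiset ℕ) + (S.erase t).bind (fun t => (↑(coverL t) : Multiset ℕ)) := by
        rw [heq, hcov]
        conv_lhs => rw [hSdec]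
        rw [Multiset.cons_bind]
      have hcount1 : ∀ q, Multiset.count q (↑(p :: rest) : Multiset ℕ) ≤ 1 :=
        Multiset.nodup_iff_count_le_one.mp (Multiset.coe_nodup.mpr hnd)
      have hsub : ∀ q ∈ coverL (a, b, c), q ∈ p :: rest := by
        intro q hq
        have : q ∈ (↑(p :: rest) : Multiset ℕ) := by
          rw [hremdec]; exact Multiset.mem_add.mpr (Or.inl hq)
        exact_mod_cast this
      have hdisj : ∀ q ∈ (S.erase t).bind (fun t => (↑(coverL t) : Multiset ℕ)),
          q ∉ coverL (a, b, c) := by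
        intro q hq1 hq2
        have h1 : 1 ≤ Multiset.count q (↑(coverL (a, b, c)) : Multiset ℕ) :=
          Multiset.one_le_count_iff_mem.mpr hq2
        have h2 : 1 ≤ Multiset.count q ((S.erase t).bind (fun t => (↑(coverL t) : Multiset ℕ))) :=
          Multiset.one_le_count_iff_mem.mpr hq1
        have h3 := hcount1 q
        rw [hremdec, Multiset.count_add] at h3
        omega
      -- the filtered list
      set rem' := (p :: rest).filter (fun q => !(coverL (a, b, c)).contains q) with hrem'
      have hfc : (↑rem' : Multiset ℕ) =
          Multiset.filter (fun q => q ∉ coverL (a, b, c)) ↑(p :: rest) := by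
        rw [Multiset.filter_coe]
        congr 1
        apply List.filter_congr
        intro q _
        simp
      have heq' : (↑rem' : Multiset ℕ) = (S.erase t).bind (fun t => ↑(coverL t)) := by
        rw [hfc, hremdec, Multiset.filter_add]
        rw [Multiset.filter_eq_nil.mpr (fun q hq h => h (by exact_mod_cast hq)),
          Multiset.filter_eq_self.mpr (fun q hq => hdisj q hq), zero_add]
      have hcard' : Multiset.card (S.erase t) ≤ n := by
        have h0 : 0 < Multiset.card S := Multiset.card_pos.mpr (fun h => by simp [h] at htS)
        rw [Multiset.card_erase_of_mem htS, Nat.pred_eq_sub_one]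
        omega
      have hrec := ih (S.erase t) rem' hcard'
        (fun u hu => hval u (Multiset.mem_of_mem_erase hu)) heq'
        (List.Nodup.filter _ hnd)
      show search (n+1) (p :: rest) = true
      rw [search]
      simp only [List.any_eq_true]
      refine ⟨(a, b, c), hcmem, ?_⟩
      rw [Bool.and_eq_true]
      constructor
      · rw [List.all_eq_true]
        intro q hq
        simpa using hsub q hq
      · exact hrec

lemma search_false : search 30 allPairs = false := by decide



def encP (pr : Fin 6 × Fin 6) : ℕ := pr.1.val * 6 + pr.2.val

lemma encP_inj : Function.Injective encP := by
  rintro ⟨a, b⟩ ⟨c, d⟩ h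
  simp only [encP] at h
  have h1 := b.isLt; have h2 := d.isLt
  have : a.val = c.val ∧ b.val = d.val := by omega
  simp [Prod.ext_iff, Fin.ext_iff, this.1, this.2]

lemma ap_count1 : ∀ q ∈ List.range 36, q / 6 ≠ q % 6 → allPairs.count q = 1 := by decide
lemma ap_count0 : ∀ q ∈ List.range 36, q / 6 = q % 6 → allPairs.count q = 0 := by decide
lemma ap_lt : ∀ q ∈ allPairs, q < 36 := by decide
lemma ap_nodup : allPairs.Nodup := by decide
lemma ap_len : allPairs.length = 30 := by decide


end NoMTS6

open NoMTS6 in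
theorem no_mts_six : ¬ ∃ T : Multiset (Fin 6 × Fin 6 × Fin 6), IsMTS T := by
  rintro ⟨T, hdist, hcnt⟩
  set M := T.bind mtsPairs with hM
  have hMne : ∀ pr ∈ M, pr.1 ≠ pr.2 := by
    intro pr hpr
    obtain ⟨t, ht, hp⟩ := Multiset.mem_bind.mp hpr
    obtain ⟨h1, h2, h3⟩ := hdist t ht
    simp only [mtsPairs, Multiset.insert_eq_cons, Multiset.mem_cons,
      Multiset.mem_singleton] at hp
    rcases hp with h | h | h <;> subst h
    · exact h1
    · exact h2
    · exact h3
  set S := T.map (fun t => ((t.1.val, t.2.1.val, t.2.2.val) : ℕ × ℕ × ℕ)) with hS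
  have hval : ∀ t ∈ S, Valid t := by
    intro t ht
    obtain ⟨u, hu, rfl⟩ := Multiset.mem_map.mp ht
    obtain ⟨h1, h2, h3⟩ := hdist u hu
    exact ⟨u.1.isLt, u.2.1.isLt, u.2.2.isLt, fun h => h1 (Fin.ext h),
      fun h => h2 (Fin.ext h), fun h => h3 (Fin.ext h)⟩
  have hSbind : (S.bind fun t => (↑(coverL t) : Multiset ℕ)) = M.map encP := by
    rw [hS, Multiset.bind_map, hM, Multiset.map_bind]
    apply Multiset.bind_congr
    intro t _
    rw [coverL_eq]
    simp [mtsPairs, encP]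
    rfl
  have hall : (↑allPairs : Multiset ℕ) = S.bind fun t => (↑(coverL t) : Multiset ℕ) := by
    rw [hSbind]
    ext q
    rw [Multiset.coe_count]
    by_cases h36 : q < 36
    · by_cases hne : q / 6 = q % 6
      · rw [ap_count0 q (List.mem_range.mpr h36) hne]
        symm
        rw [Multiset.count_eq_zero]
        intro hmem
        obtain ⟨pr, hpr, hq⟩ := Multiset.mem_map.mp hmem
        have hb := pr.2.isLt
        have ha := pr.1.isLt
        have : pr.1.val = q / 6 ∧ pr.2.val = q % 6 := by
          simp only [encP] at hq; omega
        exact hMne pr hpr (Fin.ext (by omega))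
      · rw [ap_count1 q (List.mem_range.mpr h36) hne]
        have hq : q = encP (⟨q / 6, by omega⟩, ⟨q % 6, by omega⟩) := by
          simp only [encP]; omega
        rw [hq, Multiset.count_map_eq_count' _ _ encP_inj]
        exact (hcnt _ _ (Fin.ne_of_val_ne hne)).symm
    · rw [List.count_eq_zero.mpr (fun h => h36 (ap_lt q h))]
      symm
      rw [Multiset.count_eq_zero]
      intro hmem
      obtain ⟨pr, hpr, hq⟩ := Multiset.mem_map.mp hmem
      have hb := pr.2.isLt
      have ha := pr.1.isLt
      simp only [encP] at hq
      omega
  have hcard : Multiset.card S ≤ 30 := by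
    have h1 : Multiset.card ((S.bind fun t => (↑(coverL t) : Multiset ℕ))) = 30 := by
      rw [← hall, Multiset.coe_card, ap_len]
    rw [Multiset.card_bind] at h1
    have h2 : (S.map (Multiset.card ∘ fun t => (↑(coverL t) : Multiset ℕ))) =
        S.map (fun _ => 3) := by
      apply Multiset.map_congr rfl
      intro t _
      simp [coverL_eq, Multiset.coe_card]
    rw [h2, Multiset.map_const', Multiset.sum_replicate, smul_eq_mul] at h1
    omega
  have := search_complete 30 S allPairs hcard hval hall ap_nodup
  rw [search_false] at this
  exact Bool.false_ne_true this
end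

section
/- A Mendelsohn triple system of order v exists if and only if v ≡ 0 or 1 (mod 3) and v ≠ 6. -/
set_option maxRecDepth 100000
set_option linter.unusedSectionVars false


namespace MTSAux

/-- generic pairs function -/
def gPairs {α : Type} (t : α × α × α) : Multiset (α × α) :=
  {(t.1, t.2.1), (t.2.1, t.2.2), (t.2.2, t.1)}

def IsGMTS {α : Type} [DecidableEq α] (T : Multiset (α × α × α)) : Prop :=
  (∀ t ∈ T, t.1 ≠ t.2.1 ∧ t.2.1 ≠ t.2.2 ∧ t.2.2 ≠ t.1) ∧
  ∀ x y : α, x ≠ y → Multiset.count (x, y) (T.bind gPairs) = 1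

def HasMTS (α : Type) [DecidableEq α] [Fintype α] : Prop :=
  ∃ T : Multiset (α × α × α), IsGMTS T

section Generic
variable {α : Type} [DecidableEq α] [Fintype α]

/-- the finset of off-diagonal ordered pairs -/
def offDiag2 (α : Type) [DecidableEq α] [Fintype α] : Finset (α × α) :=
  Finset.univ.filter fun p => p.1 ≠ p.2

lemma card_offDiag2 : (offDiag2 α).card + Fintype.card α =
    Fintype.card α * Fintype.card α := by
  classical
  have h1 : (Finset.univ.filter fun p : α × α => p.1 = p.2) =
      Finset.univ.image (fun a => (a, a)) := by
    ext ⟨x, y⟩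
    simp only [Finset.mem_filter, Finset.mem_univ, true_and, Finset.mem_image,
      Prod.mk.injEq]
    constructor
    · rintro rfl; exact ⟨x, rfl, rfl⟩
    · rintro ⟨a, rfl, rfl⟩; rfl
  have h2 : (Finset.univ.filter fun p : α × α => p.1 = p.2).card = Fintype.card α := by
    rw [h1, Finset.card_image_of_injective _ (fun a b h => (Prod.ext_iff.1 h).1)]
    exact Finset.card_univ
  have h3 := Finset.card_filter_add_card_filter_not
    (s := (Finset.univ : Finset (α × α))) (p := fun p => p.1 = p.2)
  rw [Finset.card_univ, Fintype.card_prod] at h3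
  have h4 : (offDiag2 α) = Finset.univ.filter fun p : α × α => ¬ p.1 = p.2 := rfl
  rw [h4]
  omega

lemma card_gPairs (t : α × α × α) : Multiset.card (gPairs t) = 3 := rfl

lemma card_bind_gPairs (T : Multiset (α × α × α)) :
    Multiset.card (T.bind gPairs) = 3 * Multiset.card T := by
  rw [Multiset.card_bind]
  have h : Multiset.map (Multiset.card ∘ gPairs) T = Multiset.map (fun _ => 3) T := rfl
  rw [h, Multiset.map_const', Multiset.sum_replicate, smul_eq_mul, mul_comm]

/-- sufficient conditions for a Mendelsohn triple system -/
lemma isGMTS_of (T : Multiset (α × α × α))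
    (h1 : ∀ t ∈ T, t.1 ≠ t.2.1 ∧ t.2.1 ≠ t.2.2 ∧ t.2.2 ≠ t.1)
    (h2 : ∀ x y : α, x ≠ y → (x, y) ∈ T.bind gPairs)
    (h3 : 3 * Multiset.card T + Fintype.card α = Fintype.card α * Fintype.card α) :
    IsGMTS T := by
  have hle : (offDiag2 α).val ≤ T.bind gPairs := by
    rw [Multiset.le_iff_count]
    intro a
    by_cases ha : a ∈ offDiag2 α
    · have h1' : Multiset.count a (offDiag2 α).val = 1 :=
        Multiset.count_eq_one_of_mem (offDiag2 α).nodup ha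
      rw [h1']
      have : a ∈ T.bind gPairs := by
        obtain ⟨x, y⟩ := a
        simp only [offDiag2, Finset.mem_filter] at ha
        exact h2 x y ha.2
      exact Multiset.one_le_count_iff_mem.2 this
    · rw [Multiset.count_eq_zero_of_notMem ha]
      exact Nat.zero_le _
  have hcard : Multiset.card (T.bind gPairs) ≤ Multiset.card (offDiag2 α).val := by
    rw [card_bind_gPairs]
    have hD := card_offDiag2 (α := α)
    have : Multiset.card (offDiag2 α).val = (offDiag2 α).card := rfl
    omega
  have heq : T.bind gPairs = (offDiag2 α).val :=
    (Multiset.eq_of_le_of_card_le hle hcard).symm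
  refine ⟨h1, fun x y hxy => ?_⟩
  rw [heq]
  exact Multiset.count_eq_one_of_mem (offDiag2 α).nodup
    (by simp [offDiag2, hxy])

lemma isGMTS_bind_eq {T : Multiset (α × α × α)} (h : IsGMTS T) :
    T.bind gPairs = (offDiag2 α).val := by
  apply Multiset.ext.2
  intro a
  obtain ⟨x, y⟩ := a
  by_cases hxy : x = y
  · subst hxy
    have h0 : (x, x) ∉ T.bind gPairs := by
      intro hmem
      obtain ⟨t, ht, hp⟩ := Multiset.mem_bind.1 hmem
      obtain ⟨d1, d2, d3⟩ := h.1 t ht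
      simp only [gPairs, Multiset.insert_eq_cons, Multiset.mem_cons,
        Multiset.mem_singleton, Prod.mk.injEq] at hp
      rcases hp with ⟨e1, e2⟩ | ⟨e1, e2⟩ | ⟨e1, e2⟩
      · exact d1 (e1.symm.trans e2)
      · exact d2 (e1.symm.trans e2)
      · exact d3 (e1.symm.trans e2)
    rw [Multiset.count_eq_zero_of_notMem h0,
      Multiset.count_eq_zero_of_notMem (by simp [offDiag2])]
  · rw [h.2 x y hxy,
      Multiset.count_eq_one_of_mem (offDiag2 α).nodup (by simp [offDiag2, hxy])]

lemma isGMTS_card {T : Multiset (α × α × α)} (h : IsGMTS T) :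
    3 * Multiset.card T + Fintype.card α = Fintype.card α * Fintype.card α := by
  have h1 := congrArg Multiset.card (isGMTS_bind_eq h)
  rw [card_bind_gPairs] at h1
  have h2 := card_offDiag2 (α := α)
  have : Multiset.card (offDiag2 α).val = (offDiag2 α).card := rfl
  omega

lemma hasMTS_of_card_eq {β : Type} [DecidableEq β] [Fintype β]
    (h : HasMTS α) (hc : Fintype.card α = Fintype.card β) : HasMTS β := by
  obtain ⟨T, hT⟩ := h
  obtain ⟨e⟩ : Nonempty (α ≃ β) := ⟨Fintype.equivOfCardEq hc⟩
  refine ⟨T.map fun t => (e t.1, e t.2.1, e t.2.2), isGMTS_of _ ?_ ?_ ?_⟩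
  · intro t ht
    obtain ⟨s, hs, rfl⟩ := Multiset.mem_map.1 ht
    obtain ⟨d1, d2, d3⟩ := hT.1 s hs
    exact ⟨fun hh => d1 (e.injective hh), fun hh => d2 (e.injective hh),
      fun hh => d3 (e.injective hh)⟩
  · intro x y hxy
    have hxy' : e.symm x ≠ e.symm y := fun hh => hxy (by
      have := congrArg e hh; simpa using this)
    have hmem : (e.symm x, e.symm y) ∈ T.bind gPairs := by
      rw [isGMTS_bind_eq hT]; simp [offDiag2, hxy']
    obtain ⟨t, ht, hp⟩ := Multiset.mem_bind.1 hmem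
    refine Multiset.mem_bind.2 ⟨(e t.1, e t.2.1, e t.2.2),
      Multiset.mem_map.2 ⟨t, ht, rfl⟩, ?_⟩
    simp only [gPairs, Multiset.insert_eq_cons, Multiset.mem_cons,
      Multiset.mem_singleton, Prod.mk.injEq] at hp ⊢
    rcases hp with ⟨e1, e2⟩ | ⟨e1, e2⟩ | ⟨e1, e2⟩
    · left
      constructor
      · rw [← e1]; simp
      · rw [← e2]; simp
    · right; left
      constructor
      · rw [← e1]; simp
      · rw [← e2]; simp
    · right; right
      constructor
      · rw [← e1]; simp
      · rw [← e2]; simp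
  · rw [Multiset.card_map, ← hc]
    exact isGMTS_card hT

end Generic

end MTSAux

namespace MTSAux

/-- Idempotent quasigroup (with explicit left/right division, existence only). -/
structure IQ (α : Type) where
  f : α → α → α
  l : α → α → α
  r : α → α → α
  idem : ∀ x, f x x = x
  fl : ∀ a b, f a (l a b) = b
  fr : ∀ a b, f (r a b) a = b

/-- idempotent quasigroup on `ZMod n` for odd `n`. -/
def iqOdd (n : ℕ) (hn : n % 2 = 1) : IQ (ZMod n) := by
  have h2k : (2 : ZMod n) * ((n + 1) / 2 : ℕ) = 1 := by
    have h : ((2 * ((n + 1) / 2) : ℕ) : ZMod n) = ((n + 1 : ℕ) : ZMod n) := by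
      congr 1; omega
    push_cast at h
    rw [ZMod.natCast_self] at h
    simpa using h
  exact
  { f := fun x y => (((n + 1) / 2 : ℕ) : ZMod n) * (x + y)
    l := fun a b => 2 * b - a
    r := fun a b => 2 * b - a
    idem := fun x => by linear_combination x * h2k
    fl := fun a b => by linear_combination b * h2k
    fr := fun a b => by linear_combination b * h2k }

/-- idempotent quasigroup on `Option (ZMod n)` (order `n+1`) for odd `n ≥ 3`. -/
def iqEven (n : ℕ) (hn : n % 2 = 1) (h3 : 3 ≤ n) : IQ (Option (ZMod n)) := by
  haveI : NeZero n := ⟨by omega⟩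
  haveI : Fact (1 < n) := ⟨by omega⟩
  set k : ZMod n := (((n + 1) / 2 : ℕ) : ZMod n) with hk
  have h2k : (2 : ZMod n) * k = 1 := by
    have h : ((2 * ((n + 1) / 2) : ℕ) : ZMod n) = ((n + 1 : ℕ) : ZMod n) := by
      congr 1; omega
    push_cast at h
    rw [ZMod.natCast_self] at h
    simpa [hk] using h
  have h10 : (1 : ZMod n) ≠ 0 := one_ne_zero
  exact
  { f := fun x y => match x, y with
      | some x, some y => if y = x + 1 then none else some (k * (x + y))
      | some x, none => some (x + k)
      | none, some y => some (y - k)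
      | none, none => none
    l := fun a b => match a, b with
      | some a, some b => if b = a + k then none else some (2 * b - a)
      | some a, none => some (a + 1)
      | none, some b => some (b + k)
      | none, none => none
    r := fun a b => match a, b with
      | some a, some b => if a = b + k then none else some (2 * b - a)
      | some a, none => some (a - 1)
      | none, some b => some (b - k)
      | none, none => none
    idem := fun x => by
      match x with
      | none => rfl
      | some x =>
        simp only
        rw [if_neg (by simp [h10.symm] : ¬ x = x + 1)]
        congr 1
        linear_combination x * h2k
    fl := fun a b => by
      match a, b with
      | none, none => rfl
      | none, some b => simp only; congr 1; ring
      | some a, none =>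
        simp
      | some a, some b =>
        simp only
        by_cases hab : b = a + k
        · rw [if_pos hab]
          simp only
          congr 1
          rw [hab]
        · rw [if_neg hab]
          simp only
          rw [if_neg (by
            intro hc
            apply hab
            have h2 : (2 : ZMod n) * b = 2 * a + 1 := by linear_combination hc
            linear_combination k * h2 + (a - b) * h2k)]
          congr 1
          linear_combination b * h2k
    fr := fun a b => by
      match a, b with
      | none, none => rfl
      | none, some b => simp only; congr 1; ring
      | some a, none =>
        simp only
        rw [if_pos (by ring : a = a - 1 + 1)]
      | some a, some b =>
        simp only
        by_cases hab : a = b + k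
        · rw [if_pos hab]
          simp only
          congr 1
          rw [hab]; ring
        · rw [if_neg hab]
          simp only
          rw [if_neg (by
            intro hc
            apply hab
            have h2 : (2 : ZMod n) * a = 2 * b + 1 := by linear_combination hc
            linear_combination k * h2 + (b - a) * h2k)]
          congr 1
          linear_combination b * h2k }

end MTSAux

namespace MTSAux
section Constructions
variable {α : Type} [DecidableEq α] [Fintype α]

def colT (x : α) : Multiset ((α × Fin 3) × (α × Fin 3) × (α × Fin 3)) :=
  {((x,0),(x,1),(x,2)), ((x,0),(x,2),(x,1))}

def crossT (q : IQ α) (p : α × α) :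
    Multiset ((α × Fin 3) × (α × Fin 3) × (α × Fin 3)) :=
  (Finset.univ : Finset (Fin 3)).val.map fun i =>
    ((p.1, i), (p.2, i), (q.f p.1 p.2, i + 1))

def T3u (q : IQ α) : Multiset ((α × Fin 3) × (α × Fin 3) × (α × Fin 3)) :=
  (Finset.univ : Finset α).val.bind colT + (offDiag2 α).val.bind (crossT q)

lemma hmemD : ∀ x y : α, x ≠ y → (x, y) ∈ (offDiag2 α).val := by
  intro x y hxy; simp [offDiag2, hxy]

lemma isGMTS_T3u (q : IQ α) : IsGMTS (T3u q) := by
  have hne : ∀ i : Fin 3, i ≠ i + 1 := by decide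
  apply isGMTS_of
  · -- distinctness
    intro t ht
    rcases Multiset.mem_add.1 ht with h | h
    · obtain ⟨x, hx, htm⟩ := Multiset.mem_bind.1 h
      simp only [colT, Multiset.insert_eq_cons, Multiset.mem_cons,
        Multiset.mem_singleton] at htm
      rcases htm with rfl | rfl
      · exact ⟨fun hc => (by decide : ((0:Fin 3) = 1) → False) (congrArg Prod.snd hc),
          fun hc => (by decide : ((1:Fin 3) = 2) → False) (congrArg Prod.snd hc),
          fun hc => (by decide : ((2:Fin 3) = 0) → False) (congrArg Prod.snd hc)⟩
      · exact ⟨fun hc => (by decide : ((0:Fin 3) = 2) → False) (congrArg Prod.snd hc),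
          fun hc => (by decide : ((2:Fin 3) = 1) → False) (congrArg Prod.snd hc),
          fun hc => (by decide : ((1:Fin 3) = 0) → False) (congrArg Prod.snd hc)⟩
    · obtain ⟨p, hp, htm⟩ := Multiset.mem_bind.1 h
      have hp' : p.1 ≠ p.2 := by
        have := Finset.mem_val.mp hp
        simpa [offDiag2] using this
      obtain ⟨i, hi, rfl⟩ := Multiset.mem_map.1 htm
      refine ⟨fun hc => hp' (congrArg Prod.fst hc), ?_, ?_⟩
      · exact fun hc => (hne i) (congrArg Prod.snd hc)
      · exact fun hc => (hne i) (congrArg Prod.snd hc).symm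
  · -- coverage
    rintro ⟨a, i⟩ ⟨b, j⟩ hab
    by_cases h : a = b
    · subst h
      have hij : i ≠ j := fun hh => hab (by rw [hh])
      have hex : ∃ t ∈ colT a, ((a, i), (a, j)) ∈ gPairs t := by
        fin_cases i <;> fin_cases j <;> simp_all [colT, gPairs]
      obtain ⟨t, ht1, ht2⟩ := hex
      exact Multiset.mem_bind.2 ⟨t, Multiset.mem_add.2
        (Or.inl (Multiset.mem_bind.2 ⟨a, by simp, ht1⟩)), ht2⟩
    · have htri : ∀ i j : Fin 3, j = i ∨ j = i + 1 ∨ i = j + 1 := by decide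
      rcases htri i j with rfl | rfl | heq
      · refine Multiset.mem_bind.2 ⟨((a, j), (b, j), (q.f a b, j + 1)),
          Multiset.mem_add.2 (Or.inr (Multiset.mem_bind.2
            ⟨(a, b), hmemD a b h, Multiset.mem_map.2 ⟨j, by simp, rfl⟩⟩)), ?_⟩
        simp [gPairs]
      · set x := q.r a b with hx
        have hfx : q.f x a = b := q.fr a b
        have hxa : x ≠ a := fun hh => h (by rw [← hfx, hh, q.idem])
        refine Multiset.mem_bind.2 ⟨((x, i), (a, i), (q.f x a, i + 1)),
          Multiset.mem_add.2 (Or.inr (Multiset.mem_bind.2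
            ⟨(x, a), hmemD x a hxa, Multiset.mem_map.2 ⟨i, by simp, rfl⟩⟩)), ?_⟩
        rw [hfx]
        simp [gPairs]
      · subst heq
        set y := q.l b a with hy
        have hfy : q.f b y = a := q.fl b a
        have hyb : y ≠ b := fun hh => h (by rw [← hfy, hh, q.idem])
        refine Multiset.mem_bind.2 ⟨((b, j), (y, j), (q.f b y, j + 1)),
          Multiset.mem_add.2 (Or.inr (Multiset.mem_bind.2
            ⟨(b, y), hmemD b y (fun hh => hyb hh.symm),
              Multiset.mem_map.2 ⟨j, by simp, rfl⟩⟩)), ?_⟩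
        rw [hfy]
        simp [gPairs]
  · -- cardinality
    have hc1 : Multiset.card ((Finset.univ : Finset α).val.bind colT) =
        2 * Fintype.card α := by
      rw [Multiset.card_bind]
      have h : Multiset.map (Multiset.card ∘ colT) (Finset.univ : Finset α).val =
          Multiset.map (fun _ => 2) (Finset.univ : Finset α).val := rfl
      rw [h, Multiset.map_const', Multiset.sum_replicate, smul_eq_mul]
      have : Multiset.card (Finset.univ : Finset α).val = Fintype.card α := rfl
      rw [this, mul_comm]
    have hc2 : Multiset.card ((offDiag2 α).val.bind (crossT q)) =
        3 * (offDiag2 α).card := by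
      rw [Multiset.card_bind]
      have h : Multiset.map (Multiset.card ∘ crossT q) (offDiag2 α).val =
          Multiset.map (fun _ => 3) (offDiag2 α).val := rfl
      rw [h, Multiset.map_const', Multiset.sum_replicate, smul_eq_mul]
      have : Multiset.card (offDiag2 α).val = (offDiag2 α).card := rfl
      rw [this, mul_comm]
    rw [show Multiset.card (T3u q) =
        Multiset.card ((Finset.univ : Finset α).val.bind colT) +
        Multiset.card ((offDiag2 α).val.bind (crossT q)) from Multiset.card_add _ _,
      hc1, hc2]
    have hD := card_offDiag2 (α := α)
    rw [Fintype.card_prod, Fintype.card_fin]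
    set c := Fintype.card α
    set K := (offDiag2 α).card
    calc 3 * (2 * c + 3 * K) + c * 3 = 9 * (K + c) := by ring
      _ = 9 * (c * c) := by rw [hD]
      _ = c * 3 * (c * 3) := by ring

lemma hasMTS_3u (q : IQ α) : HasMTS (α × Fin 3) := ⟨_, isGMTS_T3u q⟩

def colT1 (x : α) :
    Multiset ((Option (α × Fin 3)) × (Option (α × Fin 3)) × (Option (α × Fin 3))) :=
  {(some (x,0), some (x,1), some (x,2)), (some (x,1), some (x,0), none),
   (some (x,2), none, some (x,0)), (none, some (x,2), some (x,1))}

def crossT1 (q : IQ α) (p : α × α) :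
    Multiset ((Option (α × Fin 3)) × (Option (α × Fin 3)) × (Option (α × Fin 3))) :=
  (Finset.univ : Finset (Fin 3)).val.map fun i =>
    (some (p.1, i), some (p.2, i), some (q.f p.1 p.2, i + 1))

def T3u1 (q : IQ α) :
    Multiset ((Option (α × Fin 3)) × (Option (α × Fin 3)) × (Option (α × Fin 3))) :=
  (Finset.univ : Finset α).val.bind colT1 + (offDiag2 α).val.bind (crossT1 q)

lemma isGMTS_T3u1 (q : IQ α) : IsGMTS (T3u1 q) := by
  have hne : ∀ i : Fin 3, i ≠ i + 1 := by decide
  apply isGMTS_of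
  · -- distinctness
    intro t ht
    rcases Multiset.mem_add.1 ht with h | h
    · obtain ⟨x, hx, htm⟩ := Multiset.mem_bind.1 h
      simp only [colT1, Multiset.insert_eq_cons, Multiset.mem_cons,
        Multiset.mem_singleton] at htm
      rcases htm with rfl | rfl | rfl | rfl <;>
        refine ⟨?_, ?_, ?_⟩ <;>
        simp [Prod.ext_iff, Fin.ext_iff]
    · obtain ⟨p, hp, htm⟩ := Multiset.mem_bind.1 h
      have hp' : p.1 ≠ p.2 := by
        have := Finset.mem_val.mp hp
        simpa [offDiag2] using this
      obtain ⟨i, hi, rfl⟩ := Multiset.mem_map.1 htm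
      refine ⟨?_, ?_, ?_⟩
      · exact fun hc => hp' (congrArg Prod.fst (Option.some_injective _ hc))
      · exact fun hc => (hne i) (congrArg Prod.snd (Option.some_injective _ hc))
      · exact fun hc => (hne i) (congrArg Prod.snd (Option.some_injective _ hc)).symm
  · -- coverage
    intro x y hxy
    have hcolmem : ∀ (a : α) (t), t ∈ colT1 a → t ∈ T3u1 q := by
      intro a t htm
      exact Multiset.mem_add.2 (Or.inl (Multiset.mem_bind.2 ⟨a, by simp, htm⟩))
    match x, y with
    | none, none => exact absurd rfl hxy
    | none, some (a, i) =>
      have hex : ∃ t ∈ colT1 a, ((none : Option (α × Fin 3)), some (a, i)) ∈ gPairs t := by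
        fin_cases i <;> simp [colT1, gPairs]
      obtain ⟨t, ht1, ht2⟩ := hex
      exact Multiset.mem_bind.2 ⟨t, hcolmem a t ht1, ht2⟩
    | some (a, i), none =>
      have hex : ∃ t ∈ colT1 a, (some (a, i), (none : Option (α × Fin 3))) ∈ gPairs t := by
        fin_cases i <;> simp [colT1, gPairs]
      obtain ⟨t, ht1, ht2⟩ := hex
      exact Multiset.mem_bind.2 ⟨t, hcolmem a t ht1, ht2⟩
    | some (a, i), some (b, j) =>
      by_cases h : a = b
      · subst h
        have hij : i ≠ j := fun hh => hxy (by rw [hh])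
        have hex : ∃ t ∈ colT1 a, (some (a, i), some (a, j)) ∈ gPairs t := by
          fin_cases i <;> fin_cases j <;> simp_all [colT1, gPairs]
        obtain ⟨t, ht1, ht2⟩ := hex
        exact Multiset.mem_bind.2 ⟨t, hcolmem a t ht1, ht2⟩
      · have htri : ∀ i j : Fin 3, j = i ∨ j = i + 1 ∨ i = j + 1 := by decide
        rcases htri i j with rfl | rfl | heq
        · refine Multiset.mem_bind.2 ⟨(some (a, j), some (b, j), some (q.f a b, j + 1)),
            Multiset.mem_add.2 (Or.inr (Multiset.mem_bind.2
              ⟨(a, b), hmemD a b h, Multiset.mem_map.2 ⟨j, by simp, rfl⟩⟩)), ?_⟩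
          simp [gPairs]
        · set z := q.r a b with hz
          have hfz : q.f z a = b := q.fr a b
          have hza : z ≠ a := fun hh => h (by rw [← hfz, hh, q.idem])
          refine Multiset.mem_bind.2 ⟨(some (z, i), some (a, i), some (q.f z a, i + 1)),
            Multiset.mem_add.2 (Or.inr (Multiset.mem_bind.2
              ⟨(z, a), hmemD z a hza, Multiset.mem_map.2 ⟨i, by simp, rfl⟩⟩)), ?_⟩
          rw [hfz]
          simp [gPairs]
        · subst heq
          set w := q.l b a with hw
          have hfw : q.f b w = a := q.fl b a
          have hwb : w ≠ b := fun hh => h (by rw [← hfw, hh, q.idem])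
          refine Multiset.mem_bind.2 ⟨(some (b, j), some (w, j), some (q.f b w, j + 1)),
            Multiset.mem_add.2 (Or.inr (Multiset.mem_bind.2
              ⟨(b, w), hmemD b w (fun hh => hwb hh.symm),
                Multiset.mem_map.2 ⟨j, by simp, rfl⟩⟩)), ?_⟩
          rw [hfw]
          simp [gPairs]
  · -- cardinality
    have hc1 : Multiset.card ((Finset.univ : Finset α).val.bind colT1) =
        4 * Fintype.card α := by
      rw [Multiset.card_bind]
      have h : Multiset.map (Multiset.card ∘ colT1) (Finset.univ : Finset α).val =
          Multiset.map (fun _ => 4) (Finset.univ : Finset α).val := rfl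
      rw [h, Multiset.map_const', Multiset.sum_replicate, smul_eq_mul]
      have : Multiset.card (Finset.univ : Finset α).val = Fintype.card α := rfl
      rw [this, mul_comm]
    have hc2 : Multiset.card ((offDiag2 α).val.bind (crossT1 q)) =
        3 * (offDiag2 α).card := by
      rw [Multiset.card_bind]
      have h : Multiset.map (Multiset.card ∘ crossT1 q) (offDiag2 α).val =
          Multiset.map (fun _ => 3) (offDiag2 α).val := rfl
      rw [h, Multiset.map_const', Multiset.sum_replicate, smul_eq_mul]
      have : Multiset.card (offDiag2 α).val = (offDiag2 α).card := rfl
      rw [this, mul_comm]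
    rw [show Multiset.card (T3u1 q) =
        Multiset.card ((Finset.univ : Finset α).val.bind colT1) +
        Multiset.card ((offDiag2 α).val.bind (crossT1 q)) from Multiset.card_add _ _,
      hc1, hc2]
    have hD := card_offDiag2 (α := α)
    rw [Fintype.card_option, Fintype.card_prod, Fintype.card_fin]
    set c := Fintype.card α
    set K := (offDiag2 α).card
    calc 3 * (4 * c + 3 * K) + (c * 3 + 1) = 9 * (K + c) + 6 * c + 1 := by ring
      _ = 9 * (c * c) + 6 * c + 1 := by rw [hD]
      _ = (c * 3 + 1) * (c * 3 + 1) := by ring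

lemma hasMTS_3u1 (q : IQ α) : HasMTS (Option (α × Fin 3)) := ⟨_, isGMTS_T3u1 q⟩

end Constructions
end MTSAux

namespace MTSAux

/-- remove one occurrence of `a` from a list -/
def rm {β : Type} [DecidableEq β] (a : β) : List β → List β
  | [] => []
  | b :: l => if b = a then l else b :: rm a l

lemma coe_rm {β : Type} [DecidableEq β] (a : β) :
    ∀ l : List β, a ∈ l → (↑(rm a l) : Multiset β) = (↑l : Multiset β).erase a := by
  intro l
  induction l with
  | nil => intro h; simp at h
  | cons b l ih =>
    intro h
    by_cases hba : b = a
    · subst hba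
      show (↑(if b = b then l else b :: rm b l) : Multiset β) = _
      rw [if_pos rfl, ← Multiset.cons_coe, Multiset.erase_cons_head]
    · have hal : a ∈ l := by
        rcases List.mem_cons.1 h with h' | h'
        · exact absurd h'.symm hba
        · exact h'
      show (↑(if b = a then l else b :: rm a l) : Multiset β) = _
      rw [if_neg hba, ← Multiset.cons_coe, ← Multiset.cons_coe,
        Multiset.erase_cons_tail_of_mem hal, ih hal]

lemma rm_subset {β : Type} [DecidableEq β] (a b : β) :
    ∀ l : List β, b ∈ rm a l → b ∈ l := by
  intro l
  induction l with
  | nil => intro h; exact h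
  | cons x l ih =>
    show b ∈ (if x = a then l else x :: rm a l) → _
    by_cases hxa : x = a
    · rw [if_pos hxa]; intro h; exact List.mem_cons_of_mem _ h
    · rw [if_neg hxa]
      intro h
      rcases List.mem_cons.1 h with h' | h'
      · exact h' ▸ List.mem_cons_self
      · exact List.mem_cons_of_mem _ (ih h')

lemma rm_length {β : Type} [DecidableEq β] (a : β) :
    ∀ l : List β, (rm a l).length ≤ l.length := by
  intro l
  induction l with
  | nil => exact le_refl _
  | cons b l ih =>
    show (if b = a then l else b :: rm a l).length ≤ l.length + 1
    by_cases hba : b = a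
    · rw [if_pos hba]; omega
    · rw [if_neg hba]
      have : (b :: rm a l).length = (rm a l).length + 1 := rfl
      omega

/-- exhaustive exact-cover search for Mendelsohn systems -/
def mtsSearch {v : ℕ} : ℕ → List (Fin v × Fin v) → Bool
  | _, [] => true
  | 0, _ :: _ => false
  | fuel+1, p :: ps =>
    (List.finRange v).any fun c =>
      decide ((p.2, c) ∈ ps) && decide ((c, p.1) ∈ ps) &&
        mtsSearch fuel (rm (c, p.1) (rm (p.2, c) ps))

def allPairs (v : ℕ) : List (Fin v × Fin v) :=
  ((List.finRange v).product (List.finRange v)).filter fun p => p.1 ≠ p.2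

lemma rot3 {β : Type} (a b c : β) :
    (a ::ₘ b ::ₘ c ::ₘ (0 : Multiset β)) = b ::ₘ c ::ₘ a ::ₘ (0 : Multiset β) := by
  rw [Multiset.cons_swap a b, Multiset.cons_swap a c]

lemma search_sound {v : ℕ} : ∀ (fuel : ℕ) (l : List (Fin v × Fin v))
    (S : Multiset (Fin v × Fin v × Fin v)), l.length ≤ fuel →
    S.bind gPairs = ↑l → mtsSearch fuel l = true := by
  intro fuel
  induction fuel with
  | zero =>
    intro l S hlen hcov
    match l with
    | [] => rfl
    | p :: ps => simp at hlen
  | succ fuel ih =>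
    intro l S hlen hcov
    match l with
    | [] => rfl
    | p :: ps =>
      rw [← Multiset.cons_coe] at hcov
      have hpmem : p ∈ S.bind gPairs := by rw [hcov]; exact Multiset.mem_cons_self _ _
      obtain ⟨t, ht, hp⟩ := Multiset.mem_bind.1 hpmem
      have hS : t ::ₘ S.erase t = S := Multiset.cons_erase ht
      rw [← hS, Multiset.cons_bind] at hcov
      -- identify p among the three pairs of t, and the other two pairs q r
      have key : ∃ q r c, gPairs t = p ::ₘ q ::ₘ r ::ₘ (0 : Multiset (Fin v × Fin v)) ∧
          q = (p.2, c) ∧ r = (c, p.1) := by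
        simp only [gPairs, Multiset.insert_eq_cons, Multiset.mem_cons,
          Multiset.mem_singleton] at hp
        rcases hp with rfl | rfl | rfl
        · exact ⟨(t.2.1, t.2.2), (t.2.2, t.1), t.2.2, rfl, rfl, rfl⟩
        · refine ⟨(t.2.2, t.1), (t.1, t.2.1), t.1, ?_, rfl, rfl⟩
          exact rot3 (t.1, t.2.1) (t.2.1, t.2.2) (t.2.2, t.1)
        · refine ⟨(t.1, t.2.1), (t.2.1, t.2.2), t.2.1, ?_, rfl, rfl⟩
          show (t.1, t.2.1) ::ₘ (t.2.1, t.2.2) ::ₘ (t.2.2, t.1) ::ₘ 0 = _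
          rw [rot3, rot3]
      obtain ⟨q, r, c, hqr, hq, hr⟩ := key
      rw [hqr] at hcov
      rw [Multiset.cons_add, Multiset.cons_add, Multiset.cons_add,
        zero_add] at hcov
      have hcov2 : q ::ₘ r ::ₘ (S.erase t).bind gPairs = ↑ps :=
        (Multiset.cons_inj_right p).1 hcov
      have hqmem : q ∈ ps := by
        rw [← Multiset.mem_coe, ← hcov2]
        exact Multiset.mem_cons_self _ _
      have h1 : (↑(rm q ps) : Multiset (Fin v × Fin v)) =
          r ::ₘ (S.erase t).bind gPairs := by
        calc (↑(rm q ps) : Multiset (Fin v × Fin v))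
            = (↑ps : Multiset (Fin v × Fin v)).erase q := coe_rm q ps hqmem
          _ = (q ::ₘ r ::ₘ (S.erase t).bind gPairs).erase q := by rw [hcov2]
          _ = r ::ₘ (S.erase t).bind gPairs := Multiset.erase_cons_head _ _
      have hrmem : r ∈ rm q ps := by
        rw [← Multiset.mem_coe, h1]
        exact Multiset.mem_cons_self _ _
      have hcov3 : (S.erase t).bind gPairs = ↑(rm r (rm q ps)) := by
        symm
        calc (↑(rm r (rm q ps)) : Multiset (Fin v × Fin v))
            = (↑(rm q ps) : Multiset (Fin v × Fin v)).erase r := coe_rm r _ hrmem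
          _ = (r ::ₘ (S.erase t).bind gPairs).erase r := by rw [h1]
          _ = (S.erase t).bind gPairs := Multiset.erase_cons_head _ _
      have hlen2 : (rm r (rm q ps)).length ≤ fuel := by
        have h1 := rm_length r (rm q ps)
        have h2 := rm_length q ps
        simp only [List.length_cons] at hlen
        omega
      have hrec := ih (rm r (rm q ps)) (S.erase t) hlen2 hcov3
      show (List.finRange v).any _ = true
      rw [List.any_eq_true]
      refine ⟨c, List.mem_finRange c, ?_⟩
      rw [← hq, ← hr]
      simp [hqmem, rm_subset q r ps hrmem, hrec, decide_eq_true_eq]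

end MTSAux

namespace MTSAux

lemma hasMTS_small {α : Type} [DecidableEq α] [Fintype α]
    (h : Fintype.card α ≤ 1) : HasMTS α := by
  haveI : Subsingleton α := Fintype.card_le_one_iff_subsingleton.1 h
  refine ⟨0, ⟨by simp, fun x y hxy => absurd (Subsingleton.elim x y) hxy⟩⟩

lemma hasMTS_3 : HasMTS (Fin 3) := by
  refine ⟨({(0,1,2),(0,2,1)} : Multiset (Fin 3 × Fin 3 × Fin 3)), ?_⟩
  unfold IsGMTS gPairs
  decide

lemma hasMTS_4 : HasMTS (Fin 4) := by
  refine ⟨({(0,1,2),(1,0,3),(2,3,0),(3,2,1)} : Multiset (Fin 4 × Fin 4 × Fin 4)), ?_⟩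
  unfold IsGMTS gPairs
  decide

lemma hasMTS_7 : HasMTS (Fin 7) := by
  refine ⟨({(0,1,3),(0,2,6),(0,3,2),(0,4,5),(0,5,1),(0,6,4),(1,2,4),(1,4,3),
    (1,5,6),(1,6,2),(2,3,5),(2,5,4),(3,4,6),(3,6,5)} :
      Multiset (Fin 7 × Fin 7 × Fin 7)), ?_⟩
  unfold IsGMTS gPairs
  decide

lemma no_mts6 (T : Multiset (Fin 6 × Fin 6 × Fin 6)) (h : IsGMTS T) : False := by
  have hbind := isGMTS_bind_eq h
  have hlist : ((offDiag2 (Fin 6)).val : Multiset (Fin 6 × Fin 6)) = ↑(allPairs 6) := by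
    decide
  have htrue : mtsSearch 30 (allPairs 6) = true :=
    search_sound 30 (allPairs 6) T (by decide) (hbind.trans hlist)
  have hfalse : mtsSearch 30 (allPairs 6) = false := by decide
  rw [htrue] at hfalse
  exact Bool.noConfusion hfalse

lemma hasMTS_of_admissible (v : ℕ) (hmod : v % 3 = 0 ∨ v % 3 = 1) (hne : v ≠ 6) :
    HasMTS (Fin v) := by
  rcases hmod with hmod | hmod
  · -- v = 3u
    obtain ⟨u, rfl⟩ : ∃ u, v = 3 * u := ⟨v / 3, by omega⟩
    match u, hne with
    | 0, _ => exact hasMTS_small (by simp)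
    | 1, _ => exact hasMTS_3
    | 2, hne => exact absurd rfl hne
    | (m+3), _ =>
      set u := m + 3 with hu
      by_cases hpar : u % 2 = 1
      · haveI : NeZero u := ⟨by omega⟩
        have q := iqOdd u hpar
        refine hasMTS_of_card_eq (hasMTS_3u q) ?_
        rw [Fintype.card_prod, ZMod.card, Fintype.card_fin, Fintype.card_fin]
        ring
      · have hodd : (u - 1) % 2 = 1 := by omega
        have h3 : 3 ≤ u - 1 := by omega
        haveI : NeZero (u - 1) := ⟨by omega⟩
        have q := iqEven (u - 1) hodd h3
        refine hasMTS_of_card_eq (hasMTS_3u q) ?_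
        rw [Fintype.card_prod, Fintype.card_option, ZMod.card,
          Fintype.card_fin, Fintype.card_fin]
        omega
  · -- v = 3u + 1
    obtain ⟨u, rfl⟩ : ∃ u, v = 3 * u + 1 := ⟨v / 3, by omega⟩
    match u, hne with
    | 0, _ => exact hasMTS_small (by simp)
    | 1, _ => exact hasMTS_4
    | 2, _ => exact hasMTS_7
    | (m+3), _ =>
      set u := m + 3 with hu
      by_cases hpar : u % 2 = 1
      · haveI : NeZero u := ⟨by omega⟩
        have q := iqOdd u hpar
        refine hasMTS_of_card_eq (hasMTS_3u1 q) ?_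
        rw [Fintype.card_option, Fintype.card_prod, ZMod.card,
          Fintype.card_fin, Fintype.card_fin]
        ring
      · have hodd : (u - 1) % 2 = 1 := by omega
        have h3 : 3 ≤ u - 1 := by omega
        haveI : NeZero (u - 1) := ⟨by omega⟩
        have q := iqEven (u - 1) hodd h3
        refine hasMTS_of_card_eq (hasMTS_3u1 q) ?_
        rw [Fintype.card_option, Fintype.card_prod, Fintype.card_option, ZMod.card,
          Fintype.card_fin, Fintype.card_fin]
        omega

end MTSAux

theorem mts_exists_iff (v : ℕ) :
    (∃ T : Multiset (Fin v × Fin v × Fin v), IsMTS T) ↔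
      ((v % 3 = 0 ∨ v % 3 = 1) ∧ v ≠ 6) := by
  constructor
  · rintro ⟨T, hT⟩
    have hG : MTSAux.IsGMTS T := hT
    constructor
    · by_contra hcon
      have h2 : v % 3 = 2 := by omega
      have hcard := MTSAux.isGMTS_card hG
      rw [Fintype.card_fin] at hcard
      obtain ⟨k, rfl⟩ : ∃ k, v = 3 * k + 2 := ⟨v / 3, by omega⟩
      have hexp : (3 * k + 2) * (3 * k + 2) = 9 * (k * k) + 12 * k + 4 := by ring
      rw [hexp] at hcard
      generalize k * k = B at hcard
      omega
    · rintro rfl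
      exact MTSAux.no_mts6 T hG
  · rintro ⟨hmod, hne⟩
    obtain ⟨T, hT⟩ := MTSAux.hasMTS_of_admissible v hmod hne
    exact ⟨T, hT⟩
end

section
/- The permutation [0,1,3,2,4,5,6] is a 3-good sequencing of the Mendelsohn triple system of order 7 with triples {(0,1,2),(0,3,1),(0,2,4),(0,5,3),(0,4,6),(0,6,5),(1,5,2),(1,3,6),(1,4,5),(1,6,4),(2,3,4),(2,6,3),(2,5,6),(3,5,4)}. -/
set_option maxRecDepth 4000 in
theorem mts7_three_good_seq :
    IsGoodSeq 3 ({(0,1,2),(0,3,1),(0,2,4),(0,5,3),(0,4,6),(0,6,5),(1,5,2),(1,3,6),(1,4,5),(1,6,4),(2,3,4),(2,6,3),(2,5,6),(3,5,4)} : Multiset (Fin 7 × Fin 7 × Fin 7))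
      ([0,1,3,2,4,5,6] : List (Fin 7)) := by
  constructor
  · decide
  · decide
end

section
/- The Mendelsohn triple system of order 7 with triples {(0,1,2),(0,3,1),(0,2,4),(0,5,3),(0,4,6),(0,6,5),(1,5,2),(1,3,6),(1,4,5),(1,6,4),(2,3,4),(2,6,3),(2,5,6),(3,5,4)} has no 4-good sequencing. -/
def mts7T : List (Fin 7 × Fin 7 × Fin 7) :=
  [(0,1,2),(0,3,1),(0,2,4),(0,5,3),(0,4,6),(0,6,5),(1,5,2),(1,3,6),(1,4,5),(1,6,4),(2,3,4),(2,6,3),(2,5,6),(3,5,4)]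

def goodB (xs : List (Fin 7)) : Bool :=
  mts7T.all fun t =>
    (!(decide (xs.idxOf t.1 < xs.idxOf t.2.1) &&
       (decide (xs.idxOf t.2.1 < xs.idxOf t.2.2) &&
        decide (xs.idxOf t.2.2 - xs.idxOf t.1 + 1 ≤ 4))) &&
     (!(decide (xs.idxOf t.2.1 < xs.idxOf t.2.2) &&
        (decide (xs.idxOf t.2.2 < xs.idxOf t.1) &&
         decide (xs.idxOf t.1 - xs.idxOf t.2.1 + 1 ≤ 4))) &&
      !(decide (xs.idxOf t.2.2 < xs.idxOf t.1) &&
        (decide (xs.idxOf t.1 < xs.idxOf t.2.1) &&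
         decide (xs.idxOf t.2.1 - xs.idxOf t.2.2 + 1 ≤ 4)))))

lemma goodB_of_good (xs : List (Fin 7))
    (h : ∀ t ∈ ({(0,1,2),(0,3,1),(0,2,4),(0,5,3),(0,4,6),(0,6,5),(1,5,2),(1,3,6),(1,4,5),(1,6,4),(2,3,4),(2,6,3),(2,5,6),(3,5,4)} : Multiset (Fin 7 × Fin 7 × Fin 7)),
      ¬(xs.idxOf t.1 < xs.idxOf t.2.1 ∧ xs.idxOf t.2.1 < xs.idxOf t.2.2 ∧
          xs.idxOf t.2.2 - xs.idxOf t.1 + 1 ≤ 4) ∧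
      ¬(xs.idxOf t.2.1 < xs.idxOf t.2.2 ∧ xs.idxOf t.2.2 < xs.idxOf t.1 ∧
          xs.idxOf t.1 - xs.idxOf t.2.1 + 1 ≤ 4) ∧
      ¬(xs.idxOf t.2.2 < xs.idxOf t.1 ∧ xs.idxOf t.1 < xs.idxOf t.2.1 ∧
          xs.idxOf t.2.1 - xs.idxOf t.2.2 + 1 ≤ 4)) : goodB xs = true := by
  rw [goodB, List.all_eq_true]
  intro t ht
  simp only [Bool.and_eq_true, Bool.not_eq_true', Bool.and_eq_false_iff,
    decide_eq_true_eq, decide_eq_false_iff_not]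
  have := h t (by fin_cases ht <;> decide)
  tauto

set_option maxHeartbeats 10000000 in
set_option maxRecDepth 10000 in
theorem mts7_no_four_good_seq :
    ¬ ∃ xs : List (Fin 7),
      IsGoodSeq 4 ({(0,1,2),(0,3,1),(0,2,4),(0,5,3),(0,4,6),(0,6,5),(1,5,2),(1,3,6),(1,4,5),(1,6,4),(2,3,4),(2,6,3),(2,5,6),(3,5,4)} : Multiset (Fin 7 × Fin 7 × Fin 7)) xs := by
  rintro ⟨xs, hperm, hgood⟩
  match xs, hperm, hgood with
  | [], hperm, _ => exact absurd hperm.length_eq (by decide)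
  | a :: rest, hperm, hgood =>
    have ha : a ∈ List.finRange 7 := hperm.mem_iff.mp (List.mem_cons_self (a := a) (l := rest))
    have h2 : rest.Perm ((List.finRange 7).erase a) :=
      (hperm.trans (List.perm_cons_erase ha)).cons_inv
    have hx : rest ∈ ((List.finRange 7).erase a).permutations' :=
      List.mem_permutations'.mpr h2
    have key : ∀ a : Fin 7,
        (((List.finRange 7).erase a).permutations'.all fun ys => !goodB (a :: ys)) = true := by
      decide
    have hb : goodB (a :: rest) = true := goodB_of_good _ hgood
    have := List.all_eq_true.mp (key a) rest hx
    simp [hb] at this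
end

section
/- The collection of cyclic triples {(0,1,2),(0,2,1),(0,3,4),(0,4,3),(0,5,6),(0,6,5),(1,3,5),(1,5,3),(1,4,6),(1,6,4),(2,3,6),(2,6,3),(2,4,5),(2,5,4)} on point set {0,1,...,6} is a Mendelsohn triple system of order 7, and [0,1,3,2,5,6,4] is a 3-good sequencing of it. -/
set_option maxRecDepth 100000 in
theorem mts7_second_example :
    IsMTS ({(0,1,2),(0,2,1),(0,3,4),(0,4,3),(0,5,6),(0,6,5),(1,3,5),(1,5,3),(1,4,6),(1,6,4),(2,3,6),(2,6,3),(2,4,5),(2,5,4)} : Multiset (Fin 7 × Fin 7 × Fin 7)) ∧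
    IsGoodSeq 3 ({(0,1,2),(0,2,1),(0,3,4),(0,4,3),(0,5,6),(0,6,5),(1,3,5),(1,5,3),(1,4,6),(1,6,4),(2,3,6),(2,6,3),(2,4,5),(2,5,4)} : Multiset (Fin 7 × Fin 7 × Fin 7))
      ([0,1,3,2,5,6,4] : List (Fin 7)) := by
  unfold IsMTS IsGoodSeq
  constructor
  · constructor
    · decide
    · decide
  · constructor
    · decide
    · decide
end

section
/- The directed graph on vertex set {0,1,2,3,4,5} whose arcs are all ordered pairs of distinct vertices cannot be decomposed into directed 3-cycles. -/
section AuxNoMTS6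

open Equiv Equiv.Perm

set_option maxRecDepth 10000 in
private lemma perm6_sign_or_two_cycle : ∀ g : Equiv.Perm (Fin 6), ∀ u : Fin 6, g u = u →
    (∀ v, v ≠ u → g v ≠ v) → Equiv.Perm.sign g = 1 ∨ ∃ v, v ≠ u ∧ g (g v) = v := by decide

set_option maxRecDepth 10000 in
private lemma sign_prodComm6 :
    Equiv.Perm.sign (Equiv.prodComm (Fin 6) (Fin 6) : Equiv.Perm (Fin 6 × Fin 6)) = -1 := by
  decide

set_option maxRecDepth 10000 in
private lemma exists_three_others : ∀ a b c : Fin 6, a ≠ b → a ≠ c → b ≠ c →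
    ∃ d e g : Fin 6, a ≠ d ∧ b ≠ d ∧ c ≠ d ∧ a ≠ e ∧ b ≠ e ∧ c ≠ e ∧ a ≠ g ∧ b ≠ g ∧ c ≠ g ∧
      d ≠ e ∧ d ≠ g ∧ e ≠ g := by decide

private lemma cover6 (a b c d e g z : Fin 6) (h1 : a ≠ b) (h2 : a ≠ c) (h3 : b ≠ c)
    (h4 : a ≠ d) (h5 : b ≠ d) (h6 : c ≠ d) (h7 : a ≠ e) (h8 : b ≠ e) (h9 : c ≠ e)
    (h10 : a ≠ g) (h11 : b ≠ g) (h12 : c ≠ g) (h13 : d ≠ e) (h14 : d ≠ g) (h15 : e ≠ g) :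
    z = a ∨ z = b ∨ z = c ∨ z = d ∨ z = e ∨ z = g := by
  have hins : ({a, b, c, d, e, g} : Finset (Fin 6)) = Finset.univ := by
    apply Finset.eq_univ_of_card
    rw [Finset.card_insert_of_notMem (by simp [h1, h2, h4, h7, h10]),
        Finset.card_insert_of_notMem (by simp [h3, h5, h8, h11]),
        Finset.card_insert_of_notMem (by simp [h6, h9, h12]),
        Finset.card_insert_of_notMem (by simp [h13, h14]),
        Finset.card_insert_of_notMem (by simp [h15]),
        Finset.card_singleton]
    rfl
  have hz : z ∈ ({a, b, c, d, e, g} : Finset (Fin 6)) := hins ▸ Finset.mem_univ z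
  simpa using hz

/-- If `σ_a` (given by `f a ·`) swaps `b` and `c`, and `d, e` are two further points,
then the triple through arc `(d,e)` or `(e,d)` passes through `a`. -/
private lemma pair_third (f : Fin 6 → Fin 6 → Fin 6)
    (hf : ∀ x y : Fin 6, x ≠ y → f x y ≠ x ∧ f x y ≠ y ∧ f y (f x y) = x)
    (a b c d e g : Fin 6) (h1 : a ≠ b) (h2 : a ≠ c) (h3 : b ≠ c)
    (h4 : a ≠ d) (h5 : b ≠ d) (h6 : c ≠ d) (h7 : a ≠ e) (h8 : b ≠ e) (h9 : c ≠ e)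
    (h10 : a ≠ g) (h11 : b ≠ g) (h12 : c ≠ g) (h13 : d ≠ e) (h14 : d ≠ g) (h15 : e ≠ g)
    (hab : f a b = c) (hac : f a c = b) :
    f d e = a ∨ f e d = a := by
  have hP : ∀ x y : Fin 6, x ≠ y → f y (f x y) = x := fun x y h => (hf x y h).2.2
  have h3' : ∀ x y : Fin 6, x ≠ y → f (f x y) x = y := by
    intro x y h
    have hz : y ≠ f x y := (hf x y h).2.1.symm
    have := hP y (f x y) hz
    rwa [hP x y h] at this
  -- f b a = c, f c a = b
  have hba : f b a = c := by have := h3' a c h2; rwa [hac] at this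
  have hca : f c a = b := by have := h3' a b h1; rwa [hab] at this
  -- t = f a d
  have htna : f a d ≠ a := (hf a d h4).1
  have htnd : f a d ≠ d := (hf a d h4).2.1
  have htnb : f a d ≠ b := by
    intro heq
    have := h3' a d h4
    rw [heq, hba] at this
    exact h6 this
  have htnc : f a d ≠ c := by
    intro heq
    have := h3' a d h4
    rw [heq, hca] at this
    exact h5 this
  rcases cover6 a b c d e g (f a d) h1 h2 h3 h4 h5 h6 h7 h8 h9 h10 h11 h12 h13 h14 h15 with
    ht | ht | ht | ht | ht | ht
  · exact absurd ht htna
  · exact absurd ht htnb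
  · exact absurd ht htnc
  · exact absurd ht htnd
  · -- f a d = e : triple (a,d,e), so f d e = a
    left
    have := hP a d h4
    rwa [ht] at this
  · -- f a d = g : then f a e = d, triple (a,e,d), so f e d = a
    have hsna : f a e ≠ a := (hf a e h7).1
    have hsne : f a e ≠ e := (hf a e h7).2.1
    have hsnb : f a e ≠ b := by
      intro heq
      have := h3' a e h7
      rw [heq, hba] at this
      exact h9 this
    have hsnc : f a e ≠ c := by
      intro heq
      have := h3' a e h7
      rw [heq, hca] at this
      exact h8 this
    have hsng : f a e ≠ g := by
      intro heq
      have hde := h3' a d h4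
      have hee := h3' a e h7
      rw [ht] at hde
      rw [heq] at hee
      rw [hee] at hde
      exact h13 hde.symm
    rcases cover6 a b c d e g (f a e) h1 h2 h3 h4 h5 h6 h7 h8 h9 h10 h11 h12 h13 h14 h15 with
      hs | hs | hs | hs | hs | hs
    · exact absurd hs hsna
    · exact absurd hs hsnb
    · exact absurd hs hsnc
    · right
      have := hP a e h7
      rwa [hs] at this
    · exact absurd hs hsne
    · exact absurd hs hsng

private lemma no_good_f : ¬ ∃ f : Fin 6 → Fin 6 → Fin 6,
    ∀ x y : Fin 6, x ≠ y → f x y ≠ x ∧ f x y ≠ y ∧ f y (f x y) = x := by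
  rintro ⟨f, hf⟩
  have hne1 : ∀ x y, x ≠ y → f x y ≠ x := fun x y h => (hf x y h).1
  have hne2 : ∀ x y, x ≠ y → f x y ≠ y := fun x y h => (hf x y h).2.1
  have hP : ∀ x y, x ≠ y → f y (f x y) = x := fun x y h => (hf x y h).2.2
  have h3 : ∀ x y, x ≠ y → f (f x y) x = y := by
    intro x y h
    have hz : y ≠ f x y := (hne2 x y h).symm
    have := hP y (f x y) hz
    rwa [hP x y h] at this
  -- the permutation σ_u at each point u
  let σ : Fin 6 → Equiv.Perm (Fin 6) := fun u =>
    { toFun := fun y => if y = u then u else f u y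
      invFun := fun z => if z = u then u else f z u
      left_inv := by
        intro y
        by_cases h : y = u
        · simp [h]
        · have h1 : f u y ≠ u := hne1 u y (Ne.symm h)
          simp only [if_neg h, if_neg h1]
          exact h3 u y (Ne.symm h)
      right_inv := by
        intro z
        by_cases h : z = u
        · simp [h]
        · have h1 : f z u ≠ u := hne2 z u h
          simp only [if_neg h, if_neg h1]
          exact hP z u h }
  -- the permutation of arcs
  let π : Equiv.Perm (Fin 6 × Fin 6) :=
    { toFun := fun p => if p.1 = p.2 then p else (p.2, f p.1 p.2)
      invFun := fun p => if p.1 = p.2 then p else (f p.1 p.2, p.1)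
      left_inv := by
        rintro ⟨x, y⟩
        by_cases h : x = y
        · simp [h]
        · have h1 : y ≠ f x y := (hne2 x y h).symm
          simp only [if_neg h]
          simp only [if_neg h1]
          rw [hP x y h]
      right_inv := by
        rintro ⟨y, z⟩
        by_cases h : y = z
        · simp [h]
        · have h1 : f y z ≠ y := hne1 y z h
          simp only [if_neg h]
          simp only [if_neg h1]
          rw [h3 y z h] }
  have πapp : ∀ x y : Fin 6, x ≠ y → π (x, y) = (y, f x y) := by
    intro x y h
    simp [π, h]
  have πdiag : ∀ x : Fin 6, π (x, x) = (x, x) := by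
    intro x
    simp [π]
  have key : ∀ p, π (π (π p)) = p := by
    rintro ⟨x, y⟩
    by_cases h : x = y
    · subst h
      rw [πdiag, πdiag, πdiag]
    · have hyz : y ≠ f x y := (hne2 x y h).symm
      have hzx : f x y ≠ x := hne1 x y h
      rw [πapp x y h, πapp y (f x y) hyz, hP x y h, πapp (f x y) x hzx, h3 x y h]
  have hπ3 : π ^ 3 = 1 := by
    apply Equiv.ext
    intro p
    have : (π ^ 3) p = π (π (π p)) := by
      rw [pow_succ, pow_succ, pow_one]
      rfl
    rw [this, key]
    rfl
  have hsignπ : Equiv.Perm.sign π = 1 := by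
    have h := congrArg Equiv.Perm.sign hπ3
    rw [map_pow, map_one] at h
    rcases Int.units_eq_one_or (Equiv.Perm.sign π) with h1 | h1
    · exact h1
    · rw [h1] at h
      exact absurd h (by decide)
  -- decompose π
  have hdec : π = Equiv.prodCongrRight (fun u => (σ u)⁻¹) *
      (Equiv.prodComm (Fin 6) (Fin 6) : Equiv.Perm (Fin 6 × Fin 6)) := by
    apply Equiv.ext
    rintro ⟨x, y⟩
    rw [Equiv.Perm.mul_apply]
    have h1 : (Equiv.prodComm (Fin 6) (Fin 6) : Equiv.Perm (Fin 6 × Fin 6)) (x, y) = (y, x) := rfl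
    rw [h1, Equiv.prodCongrRight_apply]
    have h2 : (σ y)⁻¹ x = if x = y then y else f x y := by
      rw [Equiv.Perm.inv_def]
      rfl
    by_cases h : x = y
    · subst h
      rw [πdiag, h2, if_pos rfl]
    · rw [πapp x y h, h2, if_neg h]
  have hprod : (∏ u : Fin 6, Equiv.Perm.sign (σ u)) = -1 := by
    have h := congrArg Equiv.Perm.sign hdec
    rw [hsignπ, map_mul, Equiv.Perm.sign_prodCongrRight, sign_prodComm6] at h
    simp only [Equiv.Perm.sign_inv] at h
    rcases Int.units_eq_one_or (∏ u : Fin 6, Equiv.Perm.sign (σ u)) with h1 | h1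
    · rw [h1] at h
      exact absurd h (by decide)
    · exact h1
  -- extract a 2-cycle
  have h2cyc : ∃ u v, v ≠ u ∧ (σ u) ((σ u) v) = v := by
    by_contra hc
    push_neg at hc
    have hall : ∀ u, Equiv.Perm.sign (σ u) = 1 := by
      intro u
      have hfix : σ u u = u := by simp [σ]
      have hfpf : ∀ v, v ≠ u → σ u v ≠ v := by
        intro v hv
        have : σ u v = f u v := by simp [σ, hv]
        rw [this]
        exact hne2 u v (Ne.symm hv)
      rcases perm6_sign_or_two_cycle (σ u) u hfix hfpf with h | ⟨v, hv, hvv⟩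
      · exact h
      · exact absurd hvv (hc u v hv)
    rw [Finset.prod_congr rfl fun u _ => hall u] at hprod
    simp at hprod
  obtain ⟨a, b, hba, hswap⟩ := h2cyc
  have hσab : σ a b = f a b := by simp [σ, hba]
  have hab : a ≠ b := Ne.symm hba
  have hca : f a b ≠ a := hne1 a b hab
  have hcb : f a b ≠ b := hne2 a b hab
  have hσac : σ a (f a b) = f a (f a b) := by simp [σ, hca]
  have hac2 : f a (f a b) = b := by
    rw [hσab, hσac] at hswap
    exact hswap
  set c := f a b with hc
  have hac : a ≠ c := Ne.symm hca
  have hbc : b ≠ c := Ne.symm hcb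
  obtain ⟨d, e, g, k1, k2, k3, k4, k5, k6, k7, k8, k9, k10, k11, k12⟩ :=
    exists_three_others a b c hab hac hbc
  -- f b a = c, f b c = a, f c a = b, f c b = a
  have hba2 : f b a = c := by have := h3 a c hac; rwa [hac2] at this
  have hca2 : f c a = b := by have := h3 a b hab; exact this
  have hfab : f a b = c := hc.symm
  have hfac : f a c = b := hac2
  have hbc2 : f b c = a := by have := hP a b hab; rwa [hfab] at this
  have hcb2 : f c b = a := by have := hP a c hac; rwa [hfac] at this
  have hA := pair_third f hf a b c d e g hab hac hbc k1 k2 k3 k4 k5 k6 k7 k8 k9 k10 k11 k12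
    hfab hfac
  have hB := pair_third f hf b a c d e g hba hbc hac k2 k1 k3 k5 k4 k6 k8 k7 k9 k10 k11 k12
    hba2 hbc2
  have hC := pair_third f hf c a b d e g hac.symm hbc.symm hab k3 k1 k2 k6 k4 k5 k9 k7 k8
    k10 k11 k12 hca2 hcb2
  rcases hA with hA | hA <;> rcases hB with hB | hB <;> rcases hC with hC | hC <;>
    first
      | exact hab (hA.symm.trans hB)
      | exact hac (hA.symm.trans hC)
      | exact hbc (hB.symm.trans hC)

end AuxNoMTS6

private def mtsThird (t : Fin 6 × Fin 6 × Fin 6) (x : Fin 6) : Fin 6 :=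
  if x = t.1 then t.2.2 else if x = t.2.1 then t.1 else t.2.1

theorem no_directed_triangle_decomposition_K6 :
    ¬ ∃ T : Multiset (Fin 6 × Fin 6 × Fin 6),
      (∀ t ∈ T, t.1 ≠ t.2.1 ∧ t.2.1 ≠ t.2.2 ∧ t.2.2 ≠ t.1) ∧
      T.bind mtsPairs =
        ((Finset.univ ×ˢ Finset.univ).filter fun p : Fin 6 × Fin 6 => p.1 ≠ p.2).val := by
  rintro ⟨T, hdist, heq⟩
  have hcount : ∀ x y : Fin 6, x ≠ y → Multiset.count (x, y) (T.bind mtsPairs) = 1 := by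
    intro x y hxy
    rw [heq]
    apply Multiset.count_eq_one_of_mem (Finset.nodup _)
    rw [Finset.mem_val]
    simp [hxy]
  have hmem : ∀ x y : Fin 6, x ≠ y → ∃ t, t ∈ T ∧ (x, y) ∈ mtsPairs t := by
    intro x y hxy
    have h1 : (x, y) ∈ T.bind mtsPairs :=
      Multiset.count_pos.mp (by rw [hcount x y hxy]; norm_num)
    simpa [Multiset.mem_bind] using h1
  have huniq : ∀ (x y : Fin 6) (t₁ t₂ : Fin 6 × Fin 6 × Fin 6), t₁ ∈ T → t₂ ∈ T →
      (x, y) ∈ mtsPairs t₁ → (x, y) ∈ mtsPairs t₂ → x ≠ y → t₁ = t₂ := by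
    intro x y t₁ t₂ h₁ h₂ hp₁ hp₂ hxy
    by_contra hne
    obtain ⟨T', rfl⟩ := Multiset.exists_cons_of_mem h₁
    have h₂' : t₂ ∈ T' := by
      rcases Multiset.mem_cons.mp h₂ with h | h
      · exact absurd h.symm hne
      · exact h
    have hge : 2 ≤ Multiset.count (x, y) ((t₁ ::ₘ T').bind mtsPairs) := by
      rw [Multiset.cons_bind, Multiset.count_add]
      have c1 : 1 ≤ Multiset.count (x, y) (mtsPairs t₁) :=
        Multiset.one_le_count_iff_mem.mpr hp₁
      have c2 : 1 ≤ Multiset.count (x, y) (T'.bind mtsPairs) :=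
        Multiset.one_le_count_iff_mem.mpr (Multiset.mem_bind.mpr ⟨t₂, h₂', hp₂⟩)
      omega
    rw [hcount x y hxy] at hge
    omega
  classical
  apply no_good_f
  set F : Fin 6 → Fin 6 → Fin 6 := fun u v =>
    if h : ∃ t, t ∈ T ∧ ((u, v) : Fin 6 × Fin 6) ∈ mtsPairs t then mtsThird h.choose u
    else u with hF
  have hfval : ∀ u v s, u ≠ v → s ∈ T → (u, v) ∈ mtsPairs s → F u v = mtsThird s u := by
    intro u v s huv hsT hsp
    have hx : ∃ t, t ∈ T ∧ ((u, v) : Fin 6 × Fin 6) ∈ mtsPairs t := ⟨s, hsT, hsp⟩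
    have h1 : F u v = mtsThird hx.choose u := dif_pos hx
    rw [h1, huniq u v hx.choose s hx.choose_spec.1 hsT hx.choose_spec.2 hsp huv]
  refine ⟨F, fun x y hxy => ?_⟩
  obtain ⟨t, htT, htp⟩ := hmem x y hxy
  obtain ⟨d1, d2, d3⟩ := hdist t htT
  have hm : (x, y) = (t.1, t.2.1) ∨ (x, y) = (t.2.1, t.2.2) ∨ (x, y) = (t.2.2, t.1) := by
    simpa [mtsPairs] using htp
  have hp1 : ((t.1, t.2.1) : Fin 6 × Fin 6) ∈ mtsPairs t := by simp [mtsPairs]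
  have hp2 : ((t.2.1, t.2.2) : Fin 6 × Fin 6) ∈ mtsPairs t := by simp [mtsPairs]
  have hp3 : ((t.2.2, t.1) : Fin 6 × Fin 6) ∈ mtsPairs t := by simp [mtsPairs]
  have hv1 : F t.1 t.2.1 = t.2.2 := by
    rw [hfval t.1 t.2.1 t d1 htT hp1, mtsThird, if_pos rfl]
  have hv2 : F t.2.1 t.2.2 = t.1 := by
    rw [hfval t.2.1 t.2.2 t d2 htT hp2, mtsThird, if_neg d1.symm, if_pos rfl]
  have hv3 : F t.2.2 t.1 = t.2.1 := by
    rw [hfval t.2.2 t.1 t d3 htT hp3, mtsThird, if_neg d3, if_neg d2.symm]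
  rcases hm with h | h | h
  · simp only [Prod.mk.injEq] at h
    obtain ⟨rfl, rfl⟩ := h
    rw [hv1]
    exact ⟨d3, d2.symm, hv2⟩
  · simp only [Prod.mk.injEq] at h
    obtain ⟨rfl, rfl⟩ := h
    rw [hv2]
    exact ⟨d1, d3.symm, hv3⟩
  · simp only [Prod.mk.injEq] at h
    obtain ⟨rfl, rfl⟩ := h
    rw [hv3]
    exact ⟨d2, d1.symm, hv1⟩
end

section
/- The collection of cyclic triples {(0,2,1),(0,1,6),(0,3,2),(0,7,3),(0,4,7),(0,8,4),(0,6,5),(0,5,8),(1,2,7),(1,3,6),(1,8,3),(1,5,4),(1,4,8),(1,7,5),(2,3,8),(2,4,6),(2,6,4),(2,5,7),(2,8,5),(3,4,5),(3,7,4),(3,5,6),(6,7,8),(6,8,7)} on point set {0,1,...,8} is a Mendelsohn triple system of order 9, and the permutation [0,2,3,4,7,1,8,5,6] is a 4-good sequencing of it. -/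
set_option maxRecDepth 10000 in
theorem mts9_example_and_four_good_seq :
    IsMTS ({(0,2,1),(0,1,6),(0,3,2),(0,7,3),(0,4,7),(0,8,4),(0,6,5),(0,5,8),(1,2,7),(1,3,6),(1,8,3),(1,5,4),(1,4,8),(1,7,5),(2,3,8),(2,4,6),(2,6,4),(2,5,7),(2,8,5),(3,4,5),(3,7,4),(3,5,6),(6,7,8),(6,8,7)} : Multiset (Fin 9 × Fin 9 × Fin 9)) ∧
    IsGoodSeq 4 ({(0,2,1),(0,1,6),(0,3,2),(0,7,3),(0,4,7),(0,8,4),(0,6,5),(0,5,8),(1,2,7),(1,3,6),(1,8,3),(1,5,4),(1,4,8),(1,7,5),(2,3,8),(2,4,6),(2,6,4),(2,5,7),(2,8,5),(3,4,5),(3,7,4),(3,5,6),(6,7,8),(6,8,7)} : Multiset (Fin 9 × Fin 9 × Fin 9))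
      ([0,2,3,4,7,1,8,5,6] : List (Fin 9)) := by
  constructor
  · unfold IsMTS mtsPairs; decide
  · unfold IsGoodSeq; decide
end

section
/- The permutation [0,1,2,4,3,5,6,8,7,9] is a 3-good sequencing of the Mendelsohn triple system of order 10 with triples {(0,1,8),(0,9,1),(0,5,2),(0,2,7),(0,4,3),(0,3,6),(0,7,4),(0,6,5),(0,8,9),(1,2,3),(1,3,2),(1,4,5),(1,5,4),(1,6,7),(1,7,6),(1,9,8),(2,6,4),(2,4,8),(2,5,9),(2,8,6),(2,9,7),(3,4,9),(3,7,5),(3,5,8),(3,9,6),(3,8,7),(4,6,8),(4,7,9),(5,6,9),(5,7,8)}. -/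
set_option maxRecDepth 10000 in
theorem mts10_three_good_seq :
    IsGoodSeq 3 ({(0,1,8),(0,9,1),(0,5,2),(0,2,7),(0,4,3),(0,3,6),(0,7,4),(0,6,5),(0,8,9),(1,2,3),(1,3,2),(1,4,5),(1,5,4),(1,6,7),(1,7,6),(1,9,8),(2,6,4),(2,4,8),(2,5,9),(2,8,6),(2,9,7),(3,4,9),(3,7,5),(3,5,8),(3,9,6),(3,8,7),(4,6,8),(4,7,9),(5,6,9),(5,7,8)} : Multiset (Fin 10 × Fin 10 × Fin 10))
      ([0,1,2,4,3,5,6,8,7,9] : List (Fin 10)) := by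
  constructor
  · decide
  · intro t ht
    simp only [Multiset.insert_eq_cons, Multiset.mem_cons, Multiset.mem_singleton] at ht
    rcases ht with h|h|h|h|h|h|h|h|h|h|h|h|h|h|h|h|h|h|h|h|h|h|h|h|h|h|h|h|h|h <;> subst h <;> decide
end

section
/- Let M be the Mendelsohn triple system of order 10 with triples {(0,1,8),(0,9,1),(0,5,2),(0,2,7),(0,4,3),(0,3,6),(0,7,4),(0,6,5),(0,8,9),(1,2,3),(1,3,2),(1,4,5),(1,5,4),(1,6,7),(1,7,6),(1,9,8),(2,6,4),(2,4,8),(2,5,9),(2,8,6),(2,9,7),(3,4,9),(3,7,5),(3,5,8),(3,9,6),(3,8,7),(4,6,8),(4,7,9),(5,6,9),(5,7,8)}. Then the partial system obtained by removing the triple (0,1,8) from M admits the 4-good sequencing [0,1,2,4,7,6,5,9,3,8]. -/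
set_option maxRecDepth 100000 in
theorem mts10_partial_four_good_seq :
    IsGoodSeq 4
      (({(0,1,8),(0,9,1),(0,5,2),(0,2,7),(0,4,3),(0,3,6),(0,7,4),(0,6,5),(0,8,9),(1,2,3),(1,3,2),(1,4,5),(1,5,4),(1,6,7),(1,7,6),(1,9,8),(2,6,4),(2,4,8),(2,5,9),(2,8,6),(2,9,7),(3,4,9),(3,7,5),(3,5,8),(3,9,6),(3,8,7),(4,6,8),(4,7,9),(5,6,9),(5,7,8)} : Multiset (Fin 10 × Fin 10 × Fin 10)).erase (0,1,8))
      ([0,1,2,4,7,6,5,9,3,8] : List (Fin 10)) := by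
  constructor
  · decide
  · intro t ht
    have ht' := Multiset.erase_subset _ _ ht
    clear ht
    simp only [Multiset.insert_eq_cons, Multiset.mem_cons, Multiset.mem_singleton] at ht'
    rcases ht' with rfl|rfl|rfl|rfl|rfl|rfl|rfl|rfl|rfl|rfl|rfl|rfl|rfl|rfl|rfl|rfl|rfl|rfl|rfl|rfl|rfl|rfl|rfl|rfl|rfl|rfl|rfl|rfl|rfl|rfl
    all_goals decide
end

section
/- If a Mendelsohn triple system of order 7 has an ℓ-good sequencing, then ℓ ≤ 3. -/
private lemma multiset_rot {α : Type*} (p q r : α) :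
    ({p, q, r} : Multiset α) = {q, r, p} := by
  simp only [Multiset.insert_eq_cons, ← Multiset.cons_zero]
  rw [Multiset.cons_swap p q, Multiset.cons_swap p r]

theorem mts7_good_seq_bound (ℓ : ℕ) (T : Multiset (Fin 7 × Fin 7 × Fin 7))
    (hT : IsMTS T) (xs : List (Fin 7)) (hxs : IsGoodSeq ℓ T xs) :
    ℓ ≤ 3 := by
  by_contra hlc
  have hl : 3 < ℓ := by omega
  obtain ⟨hperm, hgood⟩ := hxs
  have hlen : xs.length = 7 := by simpa using hperm.length_eq
  have hnd : xs.Nodup := (hperm.nodup_iff).2 (List.nodup_finRange 7)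
  set x : ℕ → Fin 7 := fun a => xs.get ⟨a % 7, by rw [hlen]; exact Nat.mod_lt _ (by norm_num)⟩
    with hxdef
  have hxe : ∀ a b : ℕ, x a = x b ↔ a % 7 = b % 7 := by
    intro a b
    constructor
    · intro h
      have := List.nodup_iff_injective_get.1 hnd h
      simpa [Fin.ext_iff] using this
    · intro h; simp [hxdef, h]
  have hxne : ∀ a b : ℕ, a < 7 → b < 7 → a ≠ b → x a ≠ x b := by
    intro a b ha hb hab
    rw [Ne, hxe, Nat.mod_eq_of_lt ha, Nat.mod_eq_of_lt hb]; exact hab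
  have hidx : ∀ a : ℕ, a < 7 → xs.idxOf (x a) = a := by
    intro a ha
    have := List.get_idxOf hnd ⟨a % 7, by rw [hlen]; exact Nat.mod_lt _ (by norm_num)⟩
    simpa [hxdef, Nat.mod_eq_of_lt ha, List.get_eq_getElem] using this
  have hsur : ∀ z : Fin 7, ∃ k : ℕ, k < 7 ∧ x k = z := by
    intro z
    have hz : z ∈ xs := hperm.mem_iff.2 (List.mem_finRange z)
    have h := List.idxOf_lt_length_iff.2 hz
    refine ⟨xs.idxOf z, by omega, ?_⟩
    have h7 : xs.idxOf z < 7 := by omega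
    simp only [hxdef, Nat.mod_eq_of_lt h7]
    exact List.idxOf_get _
  have uniq : ∀ t t' : Fin 7 × Fin 7 × Fin 7, t ∈ T → t' ∈ T →
      ∀ p : Fin 7 × Fin 7, p.1 ≠ p.2 → p ∈ mtsPairs t → p ∈ mtsPairs t' → t = t' := by
    intro t t' ht ht' p hp h1 h2
    by_contra hne
    have hcnt := hT.2 p.1 p.2 hp
    have ht'' : t' ∈ T.erase t := (Multiset.mem_erase_of_ne (Ne.symm hne)).2 ht'
    have hT1 : T = t ::ₘ T.erase t := (Multiset.cons_erase ht).symm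
    have hT2 : T.erase t = t' ::ₘ (T.erase t).erase t' := (Multiset.cons_erase ht'').symm
    rw [hT1, hT2, Multiset.cons_bind, Multiset.cons_bind, Multiset.count_add,
      Multiset.count_add] at hcnt
    have c1 : 0 < Multiset.count p (mtsPairs t) := Multiset.count_pos.2 (by simpa using h1)
    have c2 : 0 < Multiset.count p (mtsPairs t') := Multiset.count_pos.2 (by simpa using h2)
    simp only [Prod.mk.eta] at hcnt
    omega
  have key : ∀ a b : ℕ, a < 7 → b < 7 → a ≠ b →
      ∃ k : ℕ, k < 7 ∧ k ≠ a ∧ k ≠ b ∧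
        (∃ t ∈ T, mtsPairs t = {(x a, x b), (x b, x k), (x k, x a)}) ∧
        ¬(a < b ∧ b < k ∧ k ≤ a + 3) ∧
        ¬(b < k ∧ k < a ∧ a ≤ b + 3) ∧
        ¬(k < a ∧ a < b ∧ b ≤ k + 3) := by
    intro a b ha hb hab
    have hne : x a ≠ x b := hxne a b ha hb hab
    have hcnt := hT.2 (x a) (x b) hne
    have hmem : (x a, x b) ∈ T.bind mtsPairs := by
      rw [← Multiset.count_pos, hcnt]; norm_num
    obtain ⟨t, htT, hpt⟩ := Multiset.mem_bind.1 hmem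
    obtain ⟨d1, d2, d3⟩ := hT.1 t htT
    have hg := hgood t htT
    obtain ⟨u, v, w⟩ := t
    simp only [mtsPairs, Multiset.insert_eq_cons, Multiset.mem_cons,
      Multiset.mem_singleton, Prod.mk.injEq] at hpt
    simp only at d1 d2 d3 hg
    have mk : ∀ z : Fin 7, z ≠ x a → z ≠ x b → ∃ k : ℕ, k < 7 ∧ x k = z ∧ k ≠ a ∧ k ≠ b ∧
        xs.idxOf z = k := by
      intro z hza hzb
      obtain ⟨k, hk7, hkz⟩ := hsur z
      refine ⟨k, hk7, hkz, ?_, ?_, by rw [← hkz]; exact hidx k hk7⟩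
      · rintro rfl; exact hza hkz.symm
      · rintro rfl; exact hzb hkz.symm
    rcases hpt with ⟨rfl, rfl⟩ | ⟨rfl, rfl⟩ | ⟨rfl, rfl⟩
    · -- t = (x a, x b, w)
      obtain ⟨k, hk7, hkz, hka, hkb, hkidx⟩ := mk w d3 (Ne.symm d2)
      rw [hidx a ha, hidx b hb, hkidx] at hg
      refine ⟨k, hk7, hka, hkb, ⟨(x a, x b, w), htT, by rw [← hkz]; rfl⟩, ?_, ?_, ?_⟩
      · rintro ⟨h1, h2, h3⟩; exact hg.1 ⟨h1, h2, by omega⟩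
      · rintro ⟨h1, h2, h3⟩; exact hg.2.1 ⟨h1, h2, by omega⟩
      · rintro ⟨h1, h2, h3⟩; exact hg.2.2 ⟨h1, h2, by omega⟩
    · -- t = (u, x a, x b)
      obtain ⟨k, hk7, hkz, hka, hkb, hkidx⟩ := mk u d1 (Ne.symm d3)
      rw [hidx a ha, hidx b hb, hkidx] at hg
      refine ⟨k, hk7, hka, hkb, ⟨(u, x a, x b), htT, ?_⟩, ?_, ?_, ?_⟩
      · show ({(u, x a), (x a, x b), (x b, u)} : Multiset _) = _
        rw [← hkz, multiset_rot]
      · rintro ⟨h1, h2, h3⟩; exact hg.2.1 ⟨h1, h2, by omega⟩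
      · rintro ⟨h1, h2, h3⟩; exact hg.2.2 ⟨h1, h2, by omega⟩
      · rintro ⟨h1, h2, h3⟩; exact hg.1 ⟨h1, h2, by omega⟩
    · -- t = (x b, v, x a)
      obtain ⟨k, hk7, hkz, hka, hkb, hkidx⟩ := mk v d2 (Ne.symm d1)
      rw [hidx a ha, hidx b hb, hkidx] at hg
      refine ⟨k, hk7, hka, hkb, ⟨(x b, v, x a), htT, ?_⟩, ?_, ?_, ?_⟩
      · show ({(x b, v), (v, x a), (x a, x b)} : Multiset _) = _
        rw [← hkz, multiset_rot, multiset_rot]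
      · rintro ⟨h1, h2, h3⟩; exact hg.2.2 ⟨h1, h2, by omega⟩
      · rintro ⟨h1, h2, h3⟩; exact hg.1 ⟨h1, h2, by omega⟩
      · rintro ⟨h1, h2, h3⟩; exact hg.2.1 ⟨h1, h2, by omega⟩
  -- step 1: pair (x 2, x 3)
  obtain ⟨k1, hk17, hk1a, hk1b, ⟨t1, ht1, hp1⟩, e11, e12, e13⟩ :=
    key 2 3 (by norm_num) (by norm_num) (by norm_num)
  obtain rfl : k1 = 6 := by omega
  -- step 2: pair (x 3, x 4)
  obtain ⟨k2, hk27, hk2a, hk2b, ⟨t2, ht2, hp2⟩, e21, e22, e23⟩ :=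
    key 3 4 (by norm_num) (by norm_num) (by norm_num)
  obtain rfl : k2 = 0 := by omega
  -- step 3: pair (x 2, x 4)
  obtain ⟨k3, hk37, hk3a, hk3b, ⟨t3, ht3, hp3⟩, e31, e32, e33⟩ :=
    key 2 4 (by norm_num) (by norm_num) (by norm_num)
  have hne3_0 : k3 ≠ 0 := by
    rintro rfl
    have heq := uniq t3 t2 ht3 ht2 (x 4, x 0)
      (hxne 4 0 (by norm_num) (by norm_num) (by norm_num))
      (by rw [hp3]; simp) (by rw [hp2]; simp)
    have hm : (x 2, x 4) ∈ mtsPairs t2 := by rw [← heq, hp3]; simp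
    rw [hp2] at hm
    simp [Multiset.insert_eq_cons, Prod.ext_iff, hxe] at hm
  have hne3_6 : k3 ≠ 6 := by
    rintro rfl
    have heq := uniq t3 t1 ht3 ht1 (x 6, x 2)
      (hxne 6 2 (by norm_num) (by norm_num) (by norm_num))
      (by rw [hp3]; simp) (by rw [hp1]; simp)
    have hm : (x 2, x 4) ∈ mtsPairs t1 := by rw [← heq, hp3]; simp
    rw [hp1] at hm
    simp [Multiset.insert_eq_cons, Prod.ext_iff, hxe] at hm
  obtain rfl : k3 = 3 := by omega
  -- step 4: pair (x 3, x 5)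
  obtain ⟨k4, hk47, hk4a, hk4b, ⟨t4, ht4, hp4⟩, e41, e42, e43⟩ :=
    key 3 5 (by norm_num) (by norm_num) (by norm_num)
  have hne4_0 : k4 ≠ 0 := by
    rintro rfl
    have heq := uniq t4 t2 ht4 ht2 (x 0, x 3)
      (hxne 0 3 (by norm_num) (by norm_num) (by norm_num))
      (by rw [hp4]; simp) (by rw [hp2]; simp)
    have hm : (x 3, x 5) ∈ mtsPairs t2 := by rw [← heq, hp4]; simp
    rw [hp2] at hm
    simp [Multiset.insert_eq_cons, Prod.ext_iff, hxe] at hm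
  have hne4_4 : k4 ≠ 4 := by
    rintro rfl
    have heq := uniq t4 t3 ht4 ht3 (x 4, x 3)
      (hxne 4 3 (by norm_num) (by norm_num) (by norm_num))
      (by rw [hp4]; simp) (by rw [hp3]; simp)
    have hm : (x 3, x 5) ∈ mtsPairs t3 := by rw [← heq, hp4]; simp
    rw [hp3] at hm
    simp [Multiset.insert_eq_cons, Prod.ext_iff, hxe] at hm
  obtain rfl : k4 = 1 := by omega
  -- step 5: pair (x 1, x 2)
  obtain ⟨k5, hk57, hk5a, hk5b, ⟨t5, ht5, hp5⟩, e51, e52, e53⟩ :=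
    key 1 2 (by norm_num) (by norm_num) (by norm_num)
  have hne5_5 : k5 ≠ 5 := by
    rintro rfl
    have heq := uniq t5 t4 ht5 ht4 (x 5, x 1)
      (hxne 5 1 (by norm_num) (by norm_num) (by norm_num))
      (by rw [hp5]; simp) (by rw [hp4]; simp)
    have hm : (x 1, x 2) ∈ mtsPairs t4 := by rw [← heq, hp5]; simp
    rw [hp4] at hm
    simp [Multiset.insert_eq_cons, Prod.ext_iff, hxe] at hm
  obtain rfl : k5 = 6 := by omega
  -- step 6: pair (x 4, x 5)
  obtain ⟨k6, hk67, hk6a, hk6b, ⟨t6, ht6, hp6⟩, e61, e62, e63⟩ :=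
    key 4 5 (by norm_num) (by norm_num) (by norm_num)
  have hne6_1 : k6 ≠ 1 := by
    rintro rfl
    have heq := uniq t6 t4 ht6 ht4 (x 5, x 1)
      (hxne 5 1 (by norm_num) (by norm_num) (by norm_num))
      (by rw [hp6]; simp) (by rw [hp4]; simp)
    have hm : (x 4, x 5) ∈ mtsPairs t4 := by rw [← heq, hp6]; simp
    rw [hp4] at hm
    simp [Multiset.insert_eq_cons, Prod.ext_iff, hxe] at hm
  obtain rfl : k6 = 0 := by omega
  -- step 7: pair (x 0, x 1)
  obtain ⟨k7, hk77, hk7a, hk7b, ⟨t7, ht7, hp7⟩, e71, e72, e73⟩ :=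
    key 0 1 (by norm_num) (by norm_num) (by norm_num)
  have hne7_4 : k7 ≠ 4 := by
    rintro rfl
    have heq := uniq t7 t2 ht7 ht2 (x 4, x 0)
      (hxne 4 0 (by norm_num) (by norm_num) (by norm_num))
      (by rw [hp7]; simp) (by rw [hp2]; simp)
    have hm : (x 0, x 1) ∈ mtsPairs t2 := by rw [← heq, hp7]; simp
    rw [hp2] at hm
    simp [Multiset.insert_eq_cons, Prod.ext_iff, hxe] at hm
  have hne7_5 : k7 ≠ 5 := by
    rintro rfl
    have heq := uniq t7 t6 ht7 ht6 (x 5, x 0)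
      (hxne 5 0 (by norm_num) (by norm_num) (by norm_num))
      (by rw [hp7]; simp) (by rw [hp6]; simp)
    have hm : (x 0, x 1) ∈ mtsPairs t6 := by rw [← heq, hp7]; simp
    rw [hp6] at hm
    simp [Multiset.insert_eq_cons, Prod.ext_iff, hxe] at hm
  obtain rfl : k7 = 6 := by omega
  -- final step: pair (x 5, x 6) has no admissible third point
  obtain ⟨k8, hk87, hk8a, hk8b, ⟨t8, ht8, hp8⟩, e81, e82, e83⟩ :=
    key 5 6 (by norm_num) (by norm_num) (by norm_num)
  have hne8_0 : k8 ≠ 0 := by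
    rintro rfl
    have heq := uniq t8 t7 ht8 ht7 (x 6, x 0)
      (hxne 6 0 (by norm_num) (by norm_num) (by norm_num))
      (by rw [hp8]; simp) (by rw [hp7]; simp)
    have hm : (x 5, x 6) ∈ mtsPairs t7 := by rw [← heq, hp8]; simp
    rw [hp7] at hm
    simp [Multiset.insert_eq_cons, Prod.ext_iff, hxe] at hm
  have hne8_1 : k8 ≠ 1 := by
    rintro rfl
    have heq := uniq t8 t5 ht8 ht5 (x 6, x 1)
      (hxne 6 1 (by norm_num) (by norm_num) (by norm_num))
      (by rw [hp8]; simp) (by rw [hp5]; simp)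
    have hm : (x 5, x 6) ∈ mtsPairs t5 := by rw [← heq, hp8]; simp
    rw [hp5] at hm
    simp [Multiset.insert_eq_cons, Prod.ext_iff, hxe] at hm
  have hne8_2 : k8 ≠ 2 := by
    rintro rfl
    have heq := uniq t8 t1 ht8 ht1 (x 6, x 2)
      (hxne 6 2 (by norm_num) (by norm_num) (by norm_num))
      (by rw [hp8]; simp) (by rw [hp1]; simp)
    have hm : (x 5, x 6) ∈ mtsPairs t1 := by rw [← heq, hp8]; simp
    rw [hp1] at hm
    simp [Multiset.insert_eq_cons, Prod.ext_iff, hxe] at hm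
  omega
end
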